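/- arXiv:1209.3467 — 2 statements merged into one kernel-verified Lean document; each statement's English description precedes it below -/
import Mathlib

section
/- Let p be a prime and let G be a finite p-central group. Set ε = 0 if p is odd and ε = 1 if p = 2, and let i ≥ ε be an integer. If x, y ∈ G satisfy [x, y] ∈ Ω_{i-ε}(G), then x^{p^i} y^{p^i} = (xy)^{p^i}. -/
/-- `H^m`: the subgroup generated by the `m`-th powers of elements of `H`. -/
def sPow {G : Type*} [Group G] (H : Subgroup G) (m : ℕ) : Subgroup G :=
  Subgroup.closure ((fun h => h ^ m) '' (H : Set G))

/-- `γ_n(G)`, the lower central series indexed so that `γ_1(G) = G`. -/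
def gamma (G : Type*) [Group G] (n : ℕ) : Subgroup G :=
  (⊤ : Subgroup G).lowerCentralSeries (n - 1)

/-- `N_{n,k}(G) = γ_k(G)^{4^{n-k}} ⋯ γ_n(G)` (product of normal subgroups = join). -/
def Nnk (G : Type*) [Group G] (n k : ℕ) : Subgroup G :=
  ⨆ i ∈ Finset.Icc k n, sPow (gamma G i) (4 ^ (n - i))

/-- The `λ̄`-series: `λ̄_1(G) = G`, `λ̄_{n+1}(G) = λ̄_n(G)^4 [λ̄_n(G), G]`. -/
def lambdaBar (G : Type*) [Group G] : ℕ → Subgroup G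
  | 0 => ⊤
  | 1 => ⊤
  | (n + 2) => sPow (lambdaBar G (n + 1)) 4 ⊔ ⁅lambdaBar G (n + 1), (⊤ : Subgroup G)⁆

/-- The lower `p`-central series: `λ_1(G) = G`, `λ_{n+1}(G) = λ_n(G)^p [λ_n(G), G]`. -/
def lowP (G : Type*) [Group G] (p : ℕ) : ℕ → Subgroup G
  | 0 => ⊤
  | 1 => ⊤
  | (n + 2) => sPow (lowP G p (n + 1)) p ⊔ ⁅lowP G p (n + 1), (⊤ : Subgroup G)⁆

/-- `Ω_i(G)`: subgroup generated by elements of order dividing `p^i`. -/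
def Omega (G : Type*) [Group G] (p i : ℕ) : Subgroup G :=
  Subgroup.closure {x : G | x ^ p ^ i = 1}

/-- A finite `p`-group is `p`-central if `Ω_1(G) ≤ Z(G)` for odd `p`,
resp. `Ω_2(G) ≤ Z(G)` for `p = 2`. -/
def IsPCentral (p : ℕ) (G : Type*) [Group G] : Prop :=
  if p = 2 then Omega G 2 2 ≤ Subgroup.center G else Omega G p 1 ≤ Subgroup.center G

instance gamma_normal (G : Type*) [Group G] (n : ℕ) : (gamma G n).Normal :=
  inferInstanceAs ((⊤ : Subgroup G).lowerCentralSeries (n - 1)).Normal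

instance sPow_normal {G : Type*} [Group G] (H : Subgroup G) [hH : H.Normal] (m : ℕ) :
    (sPow H m).Normal := by
  constructor
  intro x hx g
  induction hx using Subgroup.closure_induction with
  | mem y hy =>
    obtain ⟨h, hh, rfl⟩ := hy
    exact Subgroup.subset_closure ⟨g * h * g⁻¹, hH.conj_mem h hh g, by
      simp [conj_pow]⟩
  | one => simpa using (sPow H m).one_mem
  | mul a b _ _ ha hb =>
    have : g * (a * b) * g⁻¹ = (g * a * g⁻¹) * (g * b * g⁻¹) := by group
    rw [this]; exact (sPow H m).mul_mem ha hb
  | inv a _ ha =>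
    have : g * a⁻¹ * g⁻¹ = (g * a * g⁻¹)⁻¹ := by group
    rw [this]; exact (sPow H m).inv_mem ha

theorem normal_iSup {G : Type*} [Group G] {ι : Sort*} (f : ι → Subgroup G)
    (h : ∀ i, (f i).Normal) : (⨆ i, f i).Normal := by
  constructor
  intro x hx g
  refine Subgroup.iSup_induction f (C := fun y => g * y * g⁻¹ ∈ ⨆ i, f i) hx
    (fun i y hy => Subgroup.mem_iSup_of_mem i ((h i).conj_mem y hy g)) (by simpa using Subgroup.one_mem (⨆ i, f i)) ?_
  intro a b ha hb
  have : g * (a * b) * g⁻¹ = (g * a * g⁻¹) * (g * b * g⁻¹) := by group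
  rw [this]; exact Subgroup.mul_mem _ ha hb

instance Nnk_normal (G : Type*) [Group G] (n k : ℕ) : (Nnk G n k).Normal :=
  normal_iSup _ fun i => normal_iSup _ fun _ => inferInstance

instance lambdaBar_normal (G : Type*) [Group G] : ∀ n, (lambdaBar G n).Normal
  | 0 => inferInstanceAs (⊤ : Subgroup G).Normal
  | 1 => inferInstanceAs (⊤ : Subgroup G).Normal
  | (n + 2) => by
    haveI := lambdaBar_normal G (n + 1)
    exact inferInstanceAs
      (sPow (lambdaBar G (n + 1)) 4 ⊔ ⁅lambdaBar G (n + 1), (⊤ : Subgroup G)⁆).Normal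

instance lowP_normal (G : Type*) [Group G] (p : ℕ) : ∀ n, (lowP G p n).Normal
  | 0 => inferInstanceAs (⊤ : Subgroup G).Normal
  | 1 => inferInstanceAs (⊤ : Subgroup G).Normal
  | (n + 2) => by
    haveI := lowP_normal G p (n + 1)
    exact inferInstanceAs
      (sPow (lowP G p (n + 1)) p ⊔ ⁅lowP G p (n + 1), (⊤ : Subgroup G)⁆).Normal

/-! ### Auxiliary material for `stmt_18` -/

section OmegaBasics

variable {G : Type*} [Group G]

lemma mem_omega_of_pow {p k : ℕ} {x : G} (h : x ^ p ^ k = 1) :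
    x ∈ Omega G p k := Subgroup.subset_closure h

lemma omega_mono (G : Type*) [Group G] (p : ℕ) {k l : ℕ} (h : k ≤ l) :
    Omega G p k ≤ Omega G p l := by
  apply Subgroup.closure_mono
  intro x hx
  have hx' : x ^ p ^ k = 1 := hx
  have : x ^ p ^ l = (x ^ p ^ k) ^ p ^ (l - k) := by
    rw [← pow_mul, ← pow_add, Nat.add_sub_cancel' h]
  show x ^ p ^ l = 1
  rw [this, hx', one_pow]

instance omega_normal (G : Type*) [Group G] (p k : ℕ) : (Omega G p k).Normal := by
  constructor
  intro x hx g
  induction hx using Subgroup.closure_induction with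
  | mem y hy =>
    refine Subgroup.subset_closure (show (g * y * g⁻¹) ^ p ^ k = 1 from ?_)
    have hy' : y ^ p ^ k = 1 := hy
    rw [conj_pow, hy', mul_one, mul_inv_cancel]
  | one => simpa using (Omega G p k).one_mem
  | mul a b _ _ ha hb =>
    have : g * (a * b) * g⁻¹ = (g * a * g⁻¹) * (g * b * g⁻¹) := by group
    rw [this]; exact Subgroup.mul_mem _ ha hb
  | inv a _ ha =>
    have : g * a⁻¹ * g⁻¹ = (g * a * g⁻¹)⁻¹ := by group
    rw [this]; exact Subgroup.inv_mem _ ha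

lemma omega_zero {p : ℕ} {x : G} (h : x ∈ Omega G p 0) : x = 1 := by
  have hle : Omega G p 0 ≤ ⊥ := by
    apply (Subgroup.closure_le _).mpr
    intro y hy
    have : y ^ p ^ 0 = 1 := hy
    simpa [Subgroup.mem_bot] using this
  simpa [Subgroup.mem_bot] using hle h

end OmegaBasics

section CL

variable {H : Type*} [Group H]

lemma comm_all_inv {c : H} (hc : ∀ g : H, g * c = c * g) (g : H) : g * c⁻¹ = c⁻¹ * g := by
  calc g * c⁻¹ = c⁻¹ * (c * g) * c⁻¹ := by group
    _ = c⁻¹ * (g * c) * c⁻¹ := by rw [hc]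
    _ = c⁻¹ * g := by group

lemma comm_all_pow {c : H} (hc : ∀ g : H, g * c = c * g) (k : ℕ) (g : H) :
    g * c ^ k = c ^ k * g := by
  induction k with
  | zero => simp
  | succ k ih =>
    calc g * c^(k+1) = (g * c^k) * c := by rw [pow_succ]; group
      _ = c^k * (g * c) := by rw [ih]; group
      _ = c^k * (c * g) := by rw [hc]
      _ = c^(k+1) * g := by rw [pow_succ]; group

lemma cl_aux1 {x y c : H} (hc : ∀ g : H, g * c = c * g) (hy : y * x = x * y * c⁻¹) (n : ℕ) :
    y ^ n * x = x * y ^ n * (c⁻¹) ^ n := by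
  have hci := comm_all_inv hc
  induction n with
  | zero => simp
  | succ n ih =>
    calc y ^ (n+1) * x = y * (y ^ n * x) := by rw [pow_succ']; group
      _ = y * (x * y ^ n * (c⁻¹) ^ n) := by rw [ih]
      _ = (y * x) * y ^ n * (c⁻¹) ^ n := by group
      _ = (x * y * c⁻¹) * y ^ n * (c⁻¹) ^ n := by rw [hy]
      _ = x * y * (c⁻¹ * y ^ n) * (c⁻¹) ^ n := by group
      _ = x * y * (y ^ n * c⁻¹) * (c⁻¹) ^ n := by rw [← hci (y ^ n)]
      _ = x * y ^ (n+1) * (c⁻¹) ^ (n+1) := by rw [pow_succ', pow_succ]; group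

lemma cl1 {x y c : H} (hxy : y * x = x * y * c⁻¹) (hc : ∀ g : H, g * c = c * g) (n : ℕ) :
    (x * y) ^ n = x ^ n * y ^ n * (c⁻¹) ^ (n.choose 2) := by
  have hcomm : ∀ (m : ℕ) (g : H), g * (c⁻¹) ^ m = (c⁻¹) ^ m * g :=
    fun m g => comm_all_pow (comm_all_inv hc) m g
  induction n with
  | zero => simp
  | succ n ih =>
    have hch : (n+1).choose 2 = n.choose 2 + n := by
      rw [Nat.choose_succ_succ]
      simp [Nat.choose_one_right, Nat.add_comm]
    calc (x*y)^(n+1) = (x*y)^n * (x*y) := pow_succ _ _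
      _ = x^n * y^n * (c⁻¹)^(n.choose 2) * (x * y) := by rw [ih]
      _ = x^n * (y^n * ((c⁻¹)^(n.choose 2) * x)) * y := by group
      _ = x^n * (y^n * (x * (c⁻¹)^(n.choose 2))) * y := by rw [← hcomm (n.choose 2) x]
      _ = x^n * (y^n * x) * ((c⁻¹)^(n.choose 2) * y) := by group
      _ = x^n * (y^n * x) * (y * (c⁻¹)^(n.choose 2)) := by rw [hcomm (n.choose 2) y]
      _ = x^n * (x * y^n * (c⁻¹)^n) * (y * (c⁻¹)^(n.choose 2)) := by
            rw [cl_aux1 hc hxy n]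
      _ = x^(n+1) * y^n * ((c⁻¹)^n * y) * (c⁻¹)^(n.choose 2) := by rw [pow_succ]; group
      _ = x^(n+1) * y^n * (y * (c⁻¹)^n) * (c⁻¹)^(n.choose 2) := by rw [hcomm n y]
      _ = x^(n+1) * y^(n+1) * ((c⁻¹)^n * (c⁻¹)^(n.choose 2)) := by rw [pow_succ]; group
      _ = x^(n+1) * y^(n+1) * (c⁻¹)^((n+1).choose 2) := by
            rw [← pow_add, hch, Nat.add_comm n (n.choose 2)]

lemma cl2 {x y c : H} (hconj : y⁻¹ * x * y = x * c) (hc : ∀ g : H, g * c = c * g) (m n : ℕ) :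
    (y ^ n)⁻¹ * x ^ m * y ^ n = x ^ m * c ^ (m * n) := by
  have hcp := comm_all_pow hc
  have l1 : ∀ k : ℕ, y⁻¹ * x ^ k * y = x ^ k * c ^ k := by
    intro k
    induction k with
    | zero => simp
    | succ k ihk =>
      calc y⁻¹ * x^(k+1) * y = (y⁻¹ * x^k * y) * (y⁻¹ * x * y) := by rw [pow_succ]; group
        _ = (x^k * c^k) * (x * c) := by rw [ihk, hconj]
        _ = x^k * (c^k * x) * c := by group
        _ = x^k * (x * c^k) * c := by rw [← hcp k x]
        _ = x^(k+1) * c^(k+1) := by rw [pow_succ, pow_succ]; group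
  induction n with
  | zero => simp
  | succ n ihn =>
    calc (y^(n+1))⁻¹ * x^m * y^(n+1) = y⁻¹ * ((y^n)⁻¹ * x^m * y^n) * y := by
          rw [pow_succ]; group
      _ = y⁻¹ * (x^m * c^(m*n)) * y := by rw [ihn]
      _ = (y⁻¹ * x^m * y) * (y⁻¹ * (c^(m*n) * y)) := by group
      _ = (y⁻¹ * x^m * y) * (y⁻¹ * (y * c^(m*n))) := by rw [← hcp (m*n) y]
      _ = (x^m * c^m) * c^(m*n) := by rw [l1 m]; group
      _ = x^m * c^(m + m*n) := by rw [pow_add]; group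
      _ = x^m * c^(m*(n+1)) := by congr 1; ring

end CL
universe u
open scoped commutatorElement

section Nilp

lemma commutator_central {G : Type*} [Group G] {z w : G} (a b : G)
    (hz : z ∈ Subgroup.center G) (hw : w ∈ Subgroup.center G) :
    ⁅a * z, b * w⁆ = ⁅a, b⁆ := by
  have hzg : ∀ g : G, z * g = g * z := fun g => (Subgroup.mem_center_iff.mp hz g).symm
  have hwg : ∀ g : G, w * g = g * w := fun g => (Subgroup.mem_center_iff.mp hw g).symm
  rw [commutatorElement_def, commutatorElement_def]
  calc (a*z)*(b*w)*(a*z)⁻¹*(b*w)⁻¹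
      = a * (z * (b*w) * z⁻¹) * (a⁻¹ * (w⁻¹ * b⁻¹)) := by group
    _ = a * ((b*w) * z * z⁻¹) * (a⁻¹ * (w⁻¹ * b⁻¹)) := by rw [hzg (b*w)]
    _ = a * b * (w * a⁻¹ * w⁻¹) * b⁻¹ := by group
    _ = a * b * (a⁻¹ * w * w⁻¹) * b⁻¹ := by rw [hwg a⁻¹]
    _ = a * b * a⁻¹ * b⁻¹ := by group

theorem nilp (p : ℕ) (hp : p.Prime) : ∀ (n : ℕ) (G : Type u) [Group G] [Finite G],
    IsPGroup p G → Nat.card G ≤ n →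
    ∀ H : Subgroup G, H ⊔ commutator G = ⊤ → H = ⊤ := by
  intro n
  induction n using Nat.strong_induction_on with
  | _ n IHn =>
  intro G _ _ hpg hcard H hsup
  by_cases htr : Nat.card G ≤ 1
  · have hss : Subsingleton G := Finite.card_le_one_iff_subsingleton.mp htr
    apply Subgroup.eq_top_of_card_eq
    have h1 : Nat.card H = 1 := Nat.card_eq_one_iff_unique.mpr
      ⟨⟨fun a b => Subtype.ext (Subsingleton.elim _ _)⟩, ⟨1, H.one_mem⟩⟩
    have h2 : Nat.card G = 1 := Nat.card_eq_one_iff_unique.mpr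
      ⟨⟨fun a b => Subsingleton.elim _ _⟩, ⟨1⟩⟩
    rw [h1, h2]
  · have hnt : Nontrivial G := Finite.one_lt_card_iff_nontrivial.mp (by omega)
    haveI : Fact p.Prime := ⟨hp⟩
    have hZ : Nontrivial (Subgroup.center G) := hpg.center_nontrivial
    set Z := Subgroup.center G with hZdef
    set π := QuotientGroup.mk' Z with hπdef
    have hπs : Function.Surjective π := QuotientGroup.mk'_surjective Z
    have hcardQ : Nat.card (G ⧸ Z) < Nat.card G := by
      have h1 : Nat.card G = Nat.card (G ⧸ Z) * Nat.card Z :=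
        Subgroup.card_eq_card_quotient_mul_card_subgroup Z
      have h2 : 1 < Nat.card Z := Finite.one_lt_card_iff_nontrivial.mpr hZ
      have h3 : 0 < Nat.card (G ⧸ Z) := Nat.card_pos
      calc Nat.card (G ⧸ Z) = Nat.card (G ⧸ Z) * 1 := (mul_one _).symm
        _ < Nat.card (G ⧸ Z) * Nat.card Z := mul_lt_mul_of_pos_left h2 h3
        _ = Nat.card G := h1.symm
    have hcG : Subgroup.map π (commutator G) = commutator (G ⧸ Z) := by
      rw [commutator_def, commutator_def, Subgroup.map_commutator,
        Subgroup.map_top_of_surjective π hπs]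
    have hmap : Subgroup.map π H ⊔ commutator (G ⧸ Z) = ⊤ := by
      rw [← hcG, ← Subgroup.map_sup, hsup, Subgroup.map_top_of_surjective π hπs]
    have htop : Subgroup.map π H = ⊤ :=
      IHn (Nat.card (G ⧸ Z)) (lt_of_lt_of_le hcardQ hcard) (G ⧸ Z)
        (hpg.to_quotient Z) le_rfl (Subgroup.map π H) hmap
    have hHZ : H ⊔ Z = ⊤ := by
      have h := congrArg (Subgroup.comap π) htop
      rw [Subgroup.comap_map_eq, Subgroup.comap_top] at h
      have hker : π.ker = Z := QuotientGroup.ker_mk' Z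
      rw [hker] at h
      exact h
    have hcomm : commutator G ≤ H := by
      rw [commutator_def, Subgroup.commutator_le]
      intro g₁ _ g₂ _
      have hm : ∀ g : G, ∃ h ∈ H, ∃ z ∈ Z, h * z = g := by
        intro g
        have hg : g ∈ (↑(H ⊔ Z) : Set G) := by rw [hHZ]; trivial
        rw [Subgroup.mul_normal H Z] at hg
        exact hg
      obtain ⟨h₁, hh₁, z₁, hz₁, he₁⟩ := hm g₁
      obtain ⟨h₂, hh₂, z₂, hz₂, he₂⟩ := hm g₂
      rw [← he₁, ← he₂, commutator_central h₁ h₂ hz₁ hz₂, commutatorElement_def]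
      exact mul_mem (mul_mem (mul_mem hh₁ hh₂) (inv_mem hh₁)) (inv_mem hh₂)
    calc H = H ⊔ commutator G := (sup_eq_left.mpr hcomm).symm
      _ = ⊤ := hsup

theorem proper_aux {p : ℕ} (hp : p.Prime) {G : Type u} [Group G] [Finite G]
    (hpg : IsPGroup p G) (hna : ¬ ∀ u v : G, u * v = v * u) (a g : G) :
    Subgroup.closure {a, g⁻¹ * a * g} ≠ ⊤ := by
  intro htop
  have hmem : a⁻¹ * g⁻¹ * a * g ∈ commutator G := by
    have h1 : a⁻¹ * g⁻¹ * a * g = ⁅a⁻¹, g⁻¹⁆ := by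
      rw [commutatorElement_def]; group
    rw [h1, commutator_def]
    exact Subgroup.commutator_mem_commutator (Subgroup.mem_top _) (Subgroup.mem_top _)
  have hle : Subgroup.closure {a, g⁻¹ * a * g} ≤ Subgroup.closure {a} ⊔ commutator G := by
    apply (Subgroup.closure_le _).mpr
    intro x hx
    rcases hx with h | h
    · exact Subgroup.mem_sup_left (Subgroup.subset_closure (by simp [h]))
    · simp only [Set.mem_singleton_iff] at h
      subst h
      have heq : g⁻¹ * a * g = a * (a⁻¹ * g⁻¹ * a * g) := by group
      rw [heq]
      exact Subgroup.mul_mem _ (Subgroup.mem_sup_left (Subgroup.subset_closure (by simp)))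
        (Subgroup.mem_sup_right hmem)
  have hsup : Subgroup.closure {a} ⊔ commutator G = ⊤ :=
    top_le_iff.mp (htop ▸ hle)
  have hcyc : Subgroup.closure {a} = (⊤ : Subgroup G) :=
    nilp p hp (Nat.card G) G hpg le_rfl _ hsup
  apply hna
  intro u v
  obtain ⟨m, hm⟩ := Subgroup.mem_closure_singleton.mp (hcyc ▸ Subgroup.mem_top u)
  obtain ⟨k, hk⟩ := Subgroup.mem_closure_singleton.mp (hcyc ▸ Subgroup.mem_top v)
  rw [← hm, ← hk, ← zpow_add, ← zpow_add, add_comm]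

end Nilp

section Quot

variable {G : Type*} [Group G]

lemma central_mod (N : Subgroup G) [N.Normal] {c : G}
    (h : ∀ g : G, c⁻¹ * g⁻¹ * c * g ∈ N) :
    (QuotientGroup.mk' N) c ∈ Subgroup.center (G ⧸ N) := by
  apply Subgroup.mem_center_iff.mpr
  intro q
  obtain ⟨g, rfl⟩ := QuotientGroup.mk'_surjective N q
  have hmem : (g * c)⁻¹ * (c * g) ∈ N := by
    rw [show (g * c)⁻¹ * (c * g) = c⁻¹ * g⁻¹ * c * g by group]
    exact h g
  calc (QuotientGroup.mk' N) g * (QuotientGroup.mk' N) c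
      = (QuotientGroup.mk' N) (g * c) := (map_mul _ _ _).symm
    _ = (QuotientGroup.mk' N) (c * g) := by
        simp only [QuotientGroup.mk'_apply]
        exact (QuotientGroup.eq (s := N)).mpr hmem
    _ = (QuotientGroup.mk' N) c * (QuotientGroup.mk' N) g := map_mul _ _ _

lemma quot_eq_one (N : Subgroup G) [N.Normal] {x : G} (h : x ∈ N) :
    (QuotientGroup.mk' N) x = 1 := by
  rw [QuotientGroup.mk'_apply]
  exact (QuotientGroup.eq_one_iff x).mpr h

lemma mem_of_quot_eq_one (N : Subgroup G) [N.Normal] {x : G}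
    (h : (QuotientGroup.mk' N) x = 1) : x ∈ N := by
  rw [QuotientGroup.mk'_apply] at h
  exact (QuotientGroup.eq_one_iff x).mp h

/-- the `m`-torsion central subgroup -/
def centralTorsion (H : Type*) [Group H] (m : ℕ) : Subgroup H where
  carrier := {q | q ∈ Subgroup.center H ∧ q ^ m = 1}
  one_mem' := ⟨Subgroup.one_mem _, one_pow m⟩
  mul_mem' := by
    rintro a b ⟨ha, ha'⟩ ⟨hb, hb'⟩
    refine ⟨Subgroup.mul_mem _ ha hb, ?_⟩
    have hcom : Commute a b := (Subgroup.mem_center_iff.mp ha b).symm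
    rw [hcom.mul_pow, ha', hb', one_mul]
  inv_mem' := by
    rintro a ⟨ha, ha'⟩
    exact ⟨Subgroup.inv_mem _ ha, by rw [inv_pow, ha', inv_one]⟩

lemma mem_centralTorsion_iff {H : Type*} [Group H] {m : ℕ} {q : H} :
    q ∈ centralTorsion H m ↔ q ∈ Subgroup.center H ∧ q ^ m = 1 := Iff.rfl

end Quot

section PCentralBasics

variable {p : ℕ} {G : Type*} [Group G]

/-- `ε`: 1 if `p = 2`, 0 otherwise. -/
abbrev peps (p : ℕ) : ℕ := if p = 2 then 1 else 0

lemma pcentral_omega_le (hcent : IsPCentral p G) :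
    Omega G p (peps p + 1) ≤ Subgroup.center G := by
  unfold IsPCentral at hcent
  by_cases h : p = 2
  · subst h
    simpa [peps] using hcent
  · rw [if_neg h] at hcent
    simpa [peps, h] using hcent

lemma omega_le_center_subgroup (e : ℕ) (h : Omega G p e ≤ Subgroup.center G)
    (K : Subgroup G) : Omega (↥K) p e ≤ Subgroup.center ↥K := by
  apply (Subgroup.closure_le _).mpr
  intro t ht
  have ht' : t ^ p ^ e = 1 := ht
  have htG : (↑t : G) ^ p ^ e = 1 := by
    have := congrArg (Subtype.val) ht'
    simpa using this
  have hc : (↑t : G) ∈ Subgroup.center G := h (mem_omega_of_pow htG)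
  show t ∈ Subgroup.center ↥K
  apply Subgroup.mem_center_iff.mpr
  intro s
  apply Subtype.ext
  simpa using Subgroup.mem_center_iff.mp hc ↑s

lemma pcentral_subgroup (hcent : IsPCentral p G) (K : Subgroup G) : IsPCentral p ↥K := by
  unfold IsPCentral at hcent ⊢
  by_cases h : p = 2
  · subst h
    rw [if_pos rfl] at hcent ⊢
    exact omega_le_center_subgroup 2 hcent K
  · rw [if_neg h] at hcent ⊢
    exact omega_le_center_subgroup 1 hcent K

end PCentralBasics
section Main

/-- exponent statement -/
def Ast (p : ℕ) (G : Type*) [Group G] (j : ℕ) : Prop :=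
  ∀ x ∈ Omega G p j, x ^ p ^ j = 1

/-- commutator-drop statement -/
def Bst (p : ℕ) (G : Type*) [Group G] (j : ℕ) : Prop :=
  ∀ a ∈ Omega G p j, ∀ g : G, a⁻¹ * g⁻¹ * a * g ∈ Omega G p (j - (peps p + 1))

/-- power-homomorphism statement -/
def Cst (p : ℕ) (G : Type*) [Group G] (j : ℕ) : Prop :=
  ∀ x y : G, x⁻¹ * y⁻¹ * x * y ∈ Omega G p (j - peps p) →
    x ^ p ^ j * y ^ p ^ j = (x * y) ^ p ^ j

set_option maxHeartbeats 3200000 in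
theorem pkg (p : ℕ) (hp : p.Prime) : ∀ (n : ℕ) (G : Type u) [Group G] [Finite G],
    IsPGroup p G → IsPCentral p G → Nat.card G ≤ n →
    ∀ j : ℕ, Ast p G j ∧ Bst p G j ∧ Cst p G j := by
  intro n
  induction n using Nat.strong_induction_on with
  | _ n IHn =>
  intro G _ _ hpg hcent hcard
  have hcent' : Omega G p (peps p + 1) ≤ Subgroup.center G := pcentral_omega_le hcent
  have hcentral : ∀ x : G, x ^ p ^ (peps p + 1) = 1 → x ∈ Subgroup.center G :=
    fun x hx => hcent' (mem_omega_of_pow hx)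
  intro j
  induction j using Nat.strong_induction_on with
  | _ j IHj =>
  -- ================= B =================
  have hB : Bst p G j := by
    have hBgen : ∀ a : G, a ^ p ^ j = 1 → ∀ g : G,
        a⁻¹ * g⁻¹ * a * g ∈ Omega G p (j - (peps p + 1)) := by
      intro a ha g
      by_cases hj : j ≤ peps p + 1
      · -- `a` is central
        have hc : a ∈ Subgroup.center G := by
          apply hcentral
          have he : p ^ (peps p + 1) = p ^ j * p ^ (peps p + 1 - j) := by
            rw [← pow_add]; congr 1; omega
          rw [he, pow_mul, ha, one_pow]
        have hcomm : g * a = a * g := Subgroup.mem_center_iff.mp hc g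
        have h1 : a⁻¹ * g⁻¹ * a * g = 1 := by
          rw [show a⁻¹ * g⁻¹ * a * g = a⁻¹ * g⁻¹ * (a * g) by group, ← hcomm]; group
        rw [h1]; exact Subgroup.one_mem _
      · by_cases hab : ∀ u v : G, u * v = v * u
        · have h1 : a⁻¹ * g⁻¹ * a * g = 1 := by
            rw [show a⁻¹ * g⁻¹ * a * g = a⁻¹ * g⁻¹ * (a * g) by group, hab a g]; group
          rw [h1]; exact Subgroup.one_mem _
        · -- main case: pass to the proper subgroup generated by `a` and its conjugate
          have hKne := proper_aux hp hpg hab a g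
          set K := Subgroup.closure {a, g⁻¹ * a * g} with hKdef
          have haK : a ∈ K := Subgroup.subset_closure (by simp)
          have hvK : g⁻¹ * a * g ∈ K := Subgroup.subset_closure (by simp)
          have hlt : Nat.card K < Nat.card G := by
            have hdvd := Subgroup.card_subgroup_dvd_card K
            have hne : Nat.card K ≠ Nat.card G := fun h => hKne (Subgroup.eq_top_of_card_eq K h)
            exact lt_of_le_of_ne (Nat.le_of_dvd Nat.card_pos hdvd) hne
          have pkgK := IHn (Nat.card K) (lt_of_lt_of_le hlt hcard) K (hpg.to_subgroup K)
            (pcentral_subgroup hcent K) le_rfl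
          set u : ↥K := ⟨a, haK⟩ with hudef
          set v : ↥K := ⟨g⁻¹ * a * g, hvK⟩ with hvdef
          have hu : u ^ p ^ j = 1 := by
            apply Subtype.ext
            simpa using ha
          have hv : v ^ p ^ j = 1 := by
            apply Subtype.ext
            show (g⁻¹ * a * g) ^ p ^ j = (1 : G)
            rw [show g⁻¹ * a * g = g⁻¹ * a * g⁻¹⁻¹ by group, conj_pow, ha]
            group
          set d : ↥K := u⁻¹ * v with hddef
          have hudv : u * d = v := by rw [hddef]; group
          have hud : u⁻¹ * d⁻¹ * u * d = u⁻¹ * v⁻¹ * u * v := by rw [hddef]; group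
          have hdcoe : (↑d : G) = a⁻¹ * g⁻¹ * a * g := by
            have h1 : (↑d : G) = (↑u : G)⁻¹ * (↑v : G) := by rw [hddef]; simp
            rw [h1]
            show a⁻¹ * (g⁻¹ * a * g) = a⁻¹ * g⁻¹ * a * g
            group
          -- if `j ≤ m + peps p + 1` then `v ^ p ^ m = u ^ p ^ m`
          have hfix : ∀ m : ℕ, j ≤ m + (peps p + 1) → v ^ p ^ m = u ^ p ^ m := by
            intro m hm
            have hcentw : a ^ p ^ m ∈ Subgroup.center G := by
              apply hcentral
              rw [← pow_mul, ← pow_add]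
              have h2 : p ^ (m + (peps p + 1)) = p ^ j * p ^ (m + (peps p + 1) - j) := by
                rw [← pow_add]; congr 1; omega
              rw [h2, pow_mul, ha, one_pow]
            apply Subtype.ext
            show (g⁻¹ * a * g) ^ p ^ m = (a : G) ^ p ^ m
            rw [show g⁻¹ * a * g = g⁻¹ * a * g⁻¹⁻¹ by group, conj_pow]
            have hcw := Subgroup.mem_center_iff.mp hcentw g
            rw [show g⁻¹ * a ^ p ^ m * g⁻¹⁻¹ = g⁻¹ * (a ^ p ^ m * g) by group, ← hcw]
            group
          -- stage 1
          have huv : u⁻¹ * v⁻¹ * u * v ∈ Omega (↥K) p (j - (peps p + 1)) :=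
            (pkgK j).2.1 u (mem_omega_of_pow hu) v
          have hC1 := (pkgK (j-1)).2.2
          have hidx1 : (j-1) - peps p = j - (peps p + 1) := by omega
          have hyp1 : u⁻¹ * d⁻¹ * u * d ∈ Omega (↥K) p ((j-1) - peps p) := by
            rw [hud, hidx1]; exact huv
          have hd1 : d ^ p ^ (j-1) = 1 := by
            have hmul := hC1 u d hyp1
            rw [hudv, hfix (j-1) (by omega)] at hmul
            have h2 : u ^ p ^ (j-1) * d ^ p ^ (j-1) = u ^ p ^ (j-1) * 1 := by
              rw [mul_one]; exact hmul
            exact mul_left_cancel h2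
          by_cases hp2 : p = 2
          · -- stage 2 for p = 2
            have hpe : peps p = 1 := by simp [peps, hp2]
            have hdΩ : d ∈ Omega (↥K) p (j-1) := mem_omega_of_pow hd1
            have hdu : d⁻¹ * u⁻¹ * d * u ∈ Omega (↥K) p ((j-1) - (peps p + 1)) :=
              (pkgK (j-1)).2.1 d hdΩ u
            have hyp2 : u⁻¹ * d⁻¹ * u * d ∈ Omega (↥K) p ((j-2) - peps p) := by
              have h1 : u⁻¹ * d⁻¹ * u * d = (d⁻¹ * u⁻¹ * d * u)⁻¹ := by group
              have hidx2 : (j-2) - peps p = (j-1) - (peps p + 1) := by omega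
              rw [h1, hidx2]
              exact Subgroup.inv_mem _ hdu
            have hC2 := (pkgK (j-2)).2.2
            have hd2 : d ^ p ^ (j-2) = 1 := by
              have hmul := hC2 u d hyp2
              rw [hudv, hfix (j-2) (by omega)] at hmul
              have h2 : u ^ p ^ (j-2) * d ^ p ^ (j-2) = u ^ p ^ (j-2) * 1 := by
                rw [mul_one]; exact hmul
              exact mul_left_cancel h2
            have hdG : (a⁻¹ * g⁻¹ * a * g) ^ p ^ (j-2) = 1 := by
              have hco := congrArg (Subtype.val) hd2
              rw [← hdcoe]
              simpa using hco
            have hidx3 : j - (peps p + 1) = j - 2 := by omega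
            rw [hidx3]
            exact mem_omega_of_pow hdG
          · have hpe : peps p = 0 := by simp [peps, hp2]
            have hdG : (a⁻¹ * g⁻¹ * a * g) ^ p ^ (j-1) = 1 := by
              have hco := congrArg (Subtype.val) hd1
              rw [← hdcoe]
              simpa using hco
            have hidx3 : j - (peps p + 1) = j - 1 := by omega
            rw [hidx3]
            exact mem_omega_of_pow hdG
    intro a haΩ g
    let S : Subgroup G :=
      { carrier := {h : G | ∀ g : G, h⁻¹ * g⁻¹ * h * g ∈ Omega G p (j - (peps p + 1))}
        one_mem' := by
          intro g
          rw [show (1:G)⁻¹ * g⁻¹ * 1 * g = 1 by group]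
          exact Subgroup.one_mem _
        mul_mem' := by
          intro h₁ h₂ hh₁ hh₂ g
          have key : (h₁*h₂)⁻¹ * g⁻¹ * (h₁*h₂) * g
              = (h₂⁻¹ * (h₁⁻¹ * g⁻¹ * h₁ * g) * h₂) * (h₂⁻¹ * g⁻¹ * h₂ * g) := by group
          rw [key]
          refine Subgroup.mul_mem _ ?_ (hh₂ g)
          simpa using (omega_normal G p (j - (peps p + 1))).conj_mem _ (hh₁ g) h₂⁻¹
        inv_mem' := by
          intro h hh g
          show h⁻¹⁻¹ * g⁻¹ * h⁻¹ * g ∈ _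
          have key : h⁻¹⁻¹ * g⁻¹ * h⁻¹ * g = h * (h⁻¹ * g⁻¹ * h * g)⁻¹ * h⁻¹ := by group
          rw [key]
          simpa using (omega_normal G p (j - (peps p + 1))).conj_mem _
            (Subgroup.inv_mem _ (hh g)) h }
    have hsub : Omega G p j ≤ S := (Subgroup.closure_le S).mpr (fun x hx => hBgen x hx)
    exact hsub haΩ g
  -- ================= C =================
  have hC : Cst p G j := by
    intro x y hcm
    by_cases hp2 : p = 2
    · -- p = 2
      subst hp2
      have hpe : peps 2 = 1 := by simp [peps]
      have hcm' : x⁻¹ * y⁻¹ * x * y ∈ Omega G 2 (j-1) := by rwa [hpe] at hcm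
      by_cases hj0 : j = 0
      · subst hj0; simp
      by_cases hj1 : j = 1
      · subst hj1
        have hone := omega_zero (by simpa using hcm')
        have hyx : y * x = x * y := by
          rw [show y * x = x * y * (x⁻¹*y⁻¹*x*y)⁻¹ by group, hone]; group
        have hcomm : Commute x y := hyx.symm
        exact (hcomm.mul_pow _).symm
      have hj2 : 2 ≤ j := by omega
      obtain ⟨hA1, hB1, hC1⟩ := IHj (j-1) (by omega)
      obtain ⟨hA2, hB2, hC2⟩ := IHj (j-2) (by omega)
      have hc1 : (x⁻¹*y⁻¹*x*y) ^ 2 ^ (j-1) = 1 := hA1 _ hcm'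
      have hcsq : (x⁻¹*y⁻¹*x*y)^2 ∈ Omega G 2 (j-2) := by
        apply mem_omega_of_pow
        rw [← pow_mul, show 2 * 2^(j-2) = 2^(j-1) by rw [← pow_succ']; congr 1; omega]
        exact hc1
      have hc4 : (x⁻¹*y⁻¹*x*y)^4 ∈ Omega G 2 (j-3) := by
        by_cases hj3 : j = 2
        · subst hj3
          have h2 : (x⁻¹*y⁻¹*x*y)^2 = 1 := by simpa using hc1
          rw [show (4:ℕ) = 2*2 by norm_num, pow_mul, h2, one_pow]
          exact Subgroup.one_mem _
        · apply mem_omega_of_pow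
          rw [← pow_mul, show 4 * 2^(j-3) = 2^(j-1) by
            rw [show (4:ℕ) = 2^2 by norm_num, ← pow_add]; congr 1; omega]
          exact hc1
      have hBc : ∀ g : G, (x⁻¹*y⁻¹*x*y)⁻¹ * g⁻¹ * (x⁻¹*y⁻¹*x*y) * g ∈ Omega G 2 (j-3) := by
        intro g
        have hb := hB1 _ hcm' g
        have hi : (j-1) - (peps 2 + 1) = j - 3 := by rw [hpe]; omega
        rwa [hi] at hb
      set N₁ := Omega G 2 (j-2) with hN1def
      haveI : N₁.Normal := by rw [hN1def]; exact omega_normal G 2 (j-2)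
      set N₂ := Omega G 2 (j-3) with hN2def
      haveI : N₂.Normal := by rw [hN2def]; exact omega_normal G 2 (j-3)
      set π₁ := QuotientGroup.mk' N₁ with hπ1
      set π₂ := QuotientGroup.mk' N₂ with hπ2
      have hcen1 : π₁ (x⁻¹*y⁻¹*x*y) ∈ Subgroup.center (G ⧸ N₁) := by
        apply central_mod
        intro g
        rw [hN1def]
        exact omega_mono G 2 (by omega) (hBc g)
      have hcen2 : π₂ (x⁻¹*y⁻¹*x*y) ∈ Subgroup.center (G ⧸ N₂) := by
        apply central_mod
        intro g
        rw [hN2def]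
        exact hBc g
      have hCc1 := Subgroup.mem_center_iff.mp hcen1
      have hCc2 := Subgroup.mem_center_iff.mp hcen2
      have hcp1 : (π₁ (x⁻¹*y⁻¹*x*y))^2 = 1 := by
        rw [← map_pow]
        apply quot_eq_one
        rw [hN1def]; exact hcsq
      have hcp2 : (π₂ (x⁻¹*y⁻¹*x*y))^4 = 1 := by
        rw [← map_pow]
        apply quot_eq_one
        rw [hN2def]; exact hc4
      have hxyq1 : π₁ y * π₁ x = π₁ x * π₁ y * (π₁ (x⁻¹*y⁻¹*x*y))⁻¹ := by
        have h1 : y * x = x * y * (x⁻¹*y⁻¹*x*y)⁻¹ := by group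
        calc π₁ y * π₁ x = π₁ (y*x) := (map_mul _ _ _).symm
          _ = π₁ (x * y * (x⁻¹*y⁻¹*x*y)⁻¹) := by rw [← h1]
          _ = _ := by simp only [map_mul, map_inv]
      have hkill1 : ((π₁ (x⁻¹*y⁻¹*x*y))⁻¹) ^ (Nat.choose 4 2) = 1 := by
        rw [show Nat.choose 4 2 = 2*3 by decide, pow_mul, inv_pow, hcp1, inv_one, one_pow]
      have hcl1' := cl1 hxyq1 hCc1 4
      rw [hkill1, mul_one] at hcl1'
      set z := (x^4 * y^4)⁻¹ * (x*y)^4 with hzdef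
      have hzN : z ∈ Omega G 2 (j-2) := by
        have hmem : z ∈ N₁ := by
          apply mem_of_quot_eq_one
          have hz1 : π₁ z = (π₁ x ^ 4 * π₁ y ^ 4)⁻¹ * (π₁ x * π₁ y) ^ 4 := by
            rw [hzdef]; simp only [map_mul, map_inv, map_pow]
          rw [hz1, hcl1']
          group
        rwa [hN1def] at hmem
      have hxyp : (x*y)^4 = x^4 * y^4 * z := by rw [hzdef]; group
      have hconjq2 : (π₂ y)⁻¹ * π₂ x * π₂ y = π₂ x * π₂ (x⁻¹*y⁻¹*x*y) := by
        have h1 : y⁻¹ * x * y = x * (x⁻¹*y⁻¹*x*y) := by group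
        calc (π₂ y)⁻¹ * π₂ x * π₂ y = π₂ (y⁻¹ * x * y) := by
              rw [← map_inv, ← map_mul, ← map_mul]
          _ = π₂ (x * (x⁻¹*y⁻¹*x*y)) := by rw [h1]
          _ = _ := map_mul _ _ _
      have hk2 : (x^4)⁻¹ * (y^4)⁻¹ * x^4 * y^4 ∈ Omega G 2 (j-3) := by
        have hcl2 := cl2 hconjq2 hCc2 4 4
        have hcpp : (π₂ (x⁻¹*y⁻¹*x*y))^(4*4) = 1 := by
          rw [pow_mul, hcp2, one_pow]
        rw [hcpp, mul_one] at hcl2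
        have hmem : (x^4)⁻¹ * (y^4)⁻¹ * x^4 * y^4 ∈ N₂ := by
          apply mem_of_quot_eq_one
          have h3 : π₂ ((x^4)⁻¹ * (y^4)⁻¹ * x^4 * y^4)
              = (π₂ x ^ 4)⁻¹ * ((π₂ y ^ 4)⁻¹ * π₂ x ^ 4 * π₂ y ^ 4) := by
            simp only [map_mul, map_inv, map_pow]; group
          rw [h3, hcl2]; group
        rwa [hN2def] at hmem
      have hyp1 : (x^4*y^4)⁻¹ * z⁻¹ * (x^4*y^4) * z ∈ Omega G 2 ((j-2) - peps 2) := by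
        have hzu : z⁻¹ * (x^4*y^4)⁻¹ * z * (x^4*y^4) ∈ Omega G 2 ((j-2) - (peps 2 + 1)) :=
          hB2 z hzN (x^4*y^4)
        have h1 : (x^4*y^4)⁻¹ * z⁻¹ * (x^4*y^4) * z
            = (z⁻¹ * (x^4*y^4)⁻¹ * z * (x^4*y^4))⁻¹ := by group
        rw [h1]
        apply omega_mono G 2 (show (j-2) - (peps 2 + 1) ≤ (j-2) - peps 2 by rw [hpe]; omega)
        exact Subgroup.inv_mem _ hzu
      have e1 := hC2 (x^4*y^4) z hyp1
      have e2 : z ^ 2 ^ (j-2) = 1 := hA2 z hzN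
      have hyp2 : (x^4)⁻¹ * (y^4)⁻¹ * x^4 * y^4 ∈ Omega G 2 ((j-2) - peps 2) := by
        apply omega_mono G 2 (show j-3 ≤ (j-2) - peps 2 by rw [hpe]; omega)
        exact hk2
      have e3 := hC2 (x^4) (y^4) hyp2
      have harith : ∀ w : G, (w^4)^(2^(j-2)) = w^(2^j) := by
        intro w
        rw [← pow_mul]
        congr 1
        rw [show (4:ℕ) = 2^2 by norm_num, ← pow_add]
        congr 1
        omega
      calc x ^ 2^j * y ^ 2^j = (x^4)^(2^(j-2)) * (y^4)^(2^(j-2)) := by rw [harith, harith]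
        _ = (x^4*y^4)^(2^(j-2)) := e3
        _ = (x^4*y^4)^(2^(j-2)) * z^(2^(j-2)) := by rw [e2, mul_one]
        _ = ((x^4*y^4) * z)^(2^(j-2)) := e1
        _ = ((x*y)^4)^(2^(j-2)) := by rw [← hxyp]
        _ = (x*y)^(2^j) := harith (x*y)
    · -- p odd
      have hpe : peps p = 0 := by simp [peps, hp2]
      have hcm' : x⁻¹ * y⁻¹ * x * y ∈ Omega G p j := by rwa [hpe, Nat.sub_zero] at hcm
      rcases Nat.eq_zero_or_pos j with hj0 | hjpos
      · subst hj0; simp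
      · set N := Omega G p (j-1) with hNdef
        haveI hNn : N.Normal := by rw [hNdef]; exact omega_normal G p (j-1)
        set π := QuotientGroup.mk' N with hπdef
        have homle : Omega G p j ≤ Subgroup.comap π (centralTorsion (G ⧸ N) p) := by
          apply (Subgroup.closure_le _).mpr
          intro h hh
          have hh' : h ^ p ^ j = 1 := hh
          show π h ∈ centralTorsion (G ⧸ N) p
          rw [mem_centralTorsion_iff]
          constructor
          · apply central_mod
            intro g
            have hbg := hB h (mem_omega_of_pow hh') g
            rw [hNdef]
            rwa [show j - (peps p + 1) = j - 1 by omega] at hbg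
          · rw [← map_pow]
            apply quot_eq_one
            rw [hNdef]
            apply mem_omega_of_pow
            rw [← pow_mul, show p * p ^ (j-1) = p ^ j by rw [← pow_succ']; congr 1; omega]
            exact hh'
        have hcT := Subgroup.mem_comap.mp (homle hcm')
        rw [mem_centralTorsion_iff] at hcT
        obtain ⟨hcen, hcp⟩ := hcT
        have hCc : ∀ q : G ⧸ N, q * π (x⁻¹*y⁻¹*x*y) = π (x⁻¹*y⁻¹*x*y) * q :=
          Subgroup.mem_center_iff.mp hcen
        have hxyq : π y * π x = π x * π y * (π (x⁻¹*y⁻¹*x*y))⁻¹ := by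
          have h1 : y * x = x * y * (x⁻¹*y⁻¹*x*y)⁻¹ := by group
          calc π y * π x = π (y * x) := (map_mul _ _ _).symm
            _ = π (x * y * (x⁻¹*y⁻¹*x*y)⁻¹) := by rw [← h1]
            _ = π x * π y * (π (x⁻¹*y⁻¹*x*y))⁻¹ := by rw [map_mul, map_mul, map_inv]
        have hkill : ((π (x⁻¹*y⁻¹*x*y))⁻¹) ^ (p.choose 2) = 1 := by
          have hpo : Odd p := hp.odd_of_ne_two hp2
          obtain ⟨k, hk⟩ := hpo
          have h2 : p.choose 2 = p * k := by
            rw [Nat.choose_two_right, hk, show 2*k+1-1 = 2*k by omega,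
              Nat.mul_div_assoc _ (Dvd.intro k rfl)]
            congr 1
            omega
          rw [h2, pow_mul, inv_pow, hcp, inv_one, one_pow]
        have hcl1 := cl1 hxyq hCc p
        rw [hkill, mul_one] at hcl1
        set z := (x^p * y^p)⁻¹ * (x*y)^p with hzdef
        have hzN : z ∈ N := by
          apply mem_of_quot_eq_one
          have hz1 : π z = (π x ^ p * π y ^ p)⁻¹ * (π x * π y) ^ p := by
            rw [hzdef]; simp only [map_mul, map_inv, map_pow]
          rw [hz1, hcl1]
          group
        have hxyp : (x*y)^p = x^p * y^p * z := by rw [hzdef]; group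
        have hconjq : (π y)⁻¹ * π x * π y = π x * π (x⁻¹*y⁻¹*x*y) := by
          have h1 : y⁻¹ * x * y = x * (x⁻¹*y⁻¹*x*y) := by group
          calc (π y)⁻¹ * π x * π y = π (y⁻¹ * x * y) := by rw [← map_inv, ← map_mul, ← map_mul]
            _ = π (x * (x⁻¹*y⁻¹*x*y)) := by rw [h1]
            _ = π x * π (x⁻¹*y⁻¹*x*y) := map_mul _ _ _
        have hk2 : (x^p)⁻¹ * (y^p)⁻¹ * x^p * y^p ∈ N := by
          have hcl2 := cl2 hconjq hCc p p
          have hcpp : (π (x⁻¹*y⁻¹*x*y))^(p*p) = 1 := by rw [pow_mul, hcp, one_pow]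
          rw [hcpp, mul_one] at hcl2
          apply mem_of_quot_eq_one
          have h3 : π ((x^p)⁻¹ * (y^p)⁻¹ * x^p * y^p)
              = (π x ^ p)⁻¹ * ((π y ^ p)⁻¹ * π x ^ p * π y ^ p) := by
            simp only [map_mul, map_inv, map_pow]
            group
          rw [h3, hcl2]
          group
        obtain ⟨hA1, hB1, hC1⟩ := IHj (j-1) (by omega)
        have hidx : (j-1) - peps p = j - 1 := by omega
        have hzN' : z ∈ Omega G p (j-1) := by rwa [hNdef] at hzN
        have hyp1 : (x^p*y^p)⁻¹ * z⁻¹ * (x^p*y^p) * z ∈ Omega G p ((j-1) - peps p) := by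
          rw [hidx]
          have h1 : (x^p*y^p)⁻¹ * z⁻¹ * (x^p*y^p) ∈ Omega G p (j-1) := by
            simpa using (omega_normal G p (j-1)).conj_mem _ (Subgroup.inv_mem _ hzN') (x^p*y^p)⁻¹
          rw [show (x^p*y^p)⁻¹ * z⁻¹ * (x^p*y^p) * z
              = ((x^p*y^p)⁻¹ * z⁻¹ * (x^p*y^p)) * z by group]
          exact Subgroup.mul_mem _ h1 hzN'
        have e1 := hC1 (x^p*y^p) z hyp1
        have e2 : z ^ p ^ (j-1) = 1 := hA1 z hzN'
        have hyp2 : (x^p)⁻¹ * (y^p)⁻¹ * x^p * y^p ∈ Omega G p ((j-1) - peps p) := by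
          rw [hidx]; rwa [hNdef] at hk2
        have e3 := hC1 (x^p) (y^p) hyp2
        have harith : ∀ w : G, (w^p)^(p^(j-1)) = w^(p^j) := by
          intro w; rw [← pow_mul]; congr 1; rw [← pow_succ']; congr 1; omega
        calc x ^ p^j * y ^ p^j = (x^p)^(p^(j-1)) * (y^p)^(p^(j-1)) := by rw [harith, harith]
          _ = (x^p*y^p)^(p^(j-1)) := e3
          _ = (x^p*y^p)^(p^(j-1)) * z^(p^(j-1)) := by rw [e2, mul_one]
          _ = ((x^p*y^p) * z)^(p^(j-1)) := e1
          _ = ((x*y)^p)^(p^(j-1)) := by rw [← hxyp]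
          _ = (x*y)^(p^j) := harith (x*y)
  -- ================= A =================
  have hA : Ast p G j := by
    let W : Subgroup G :=
      { carrier := {x : G | x ^ p ^ j = 1}
        one_mem' := one_pow _
        mul_mem' := by
          intro u v hu hv
          have hu' : u ^ p ^ j = 1 := hu
          have hv' : v ^ p ^ j = 1 := hv
          have hcm : u⁻¹ * v⁻¹ * u * v ∈ Omega G p (j - peps p) :=
            omega_mono G p (by omega) (hB u (mem_omega_of_pow hu') v)
          show (u * v) ^ p ^ j = 1
          rw [← hC u v hcm, hu', hv', one_mul]
        inv_mem' := by
          intro x hx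
          have hx' : x ^ p ^ j = 1 := hx
          show x⁻¹ ^ p ^ j = 1
          rw [inv_pow, hx', inv_one] }
    intro x hx
    exact (Subgroup.closure_le W).mpr (fun t ht => ht) hx
  exact ⟨hA, hB, hC⟩

end Main
theorem stmt_18 (p : ℕ) (hp : p.Prime) (G : Type*) [Group G] [Finite G]
    (hpg : IsPGroup p G) (hcent : IsPCentral p G)
    (ε i : ℕ) (hε : ε = if p = 2 then 1 else 0) (hi : ε ≤ i)
    (x y : G) (hxy : x⁻¹ * y⁻¹ * x * y ∈ Omega G p (i - ε)) :
    x ^ p ^ i * y ^ p ^ i = (x * y) ^ p ^ i := by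
  subst hε
  exact (pkg p hp (Nat.card G) G hpg hcent le_rfl i).2.2 x y hxy
end

section
/- Let p be a prime, let G be a finite p-central group, and let e be the nonnegative integer with exp(G/Z(G)) = p^e. (a) If p is odd, then (xy)^{p^e} = x^{p^e} y^{p^e} for all x, y ∈ G (so the p^e-th power map is an endomorphism of G and the exponential rank of G is 0). (b) If p = 2 and G is not abelian, then (xy)^{2^{e+1}} = x^{2^{e+1}} y^{2^{e+1}} for all x, y ∈ G, and there exist x, y ∈ G with (xy)^{2^e} ≠ x^{2^e} y^{2^e} (so the exponential rank of G is 1). -/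
namespace PCentralAux


open Subgroup

universe u
variable {G : Type u} [Group G]

/-- The subgroup of elements killed by `n`, assuming all such elements are central. -/
def powSub (n : ℕ) (hc : ∀ x : G, x ^ n = 1 → x ∈ center G) : Subgroup G where
  carrier := {x | x ^ n = 1}
  one_mem' := one_pow n
  mul_mem' := by
    intro a b ha hb
    have ha' : a ^ n = 1 := ha
    have hb' : b ^ n = 1 := hb
    have hcab : Commute a b := ((Subgroup.mem_center_iff.mp (hc a ha')) b).symm
    show (a * b) ^ n = 1
    rw [hcab.mul_pow, ha', hb', one_mul]
  inv_mem' := by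
    intro a ha
    have ha' : a ^ n = 1 := ha
    show (a⁻¹) ^ n = 1
    rw [inv_pow, ha', inv_one]

theorem mem_powSub {n : ℕ} {hc : ∀ x : G, x ^ n = 1 → x ∈ center G} {x : G} :
    x ∈ powSub n hc ↔ x ^ n = 1 := Iff.rfl

theorem powSub_le_center {n : ℕ} (hc : ∀ x : G, x ^ n = 1 → x ∈ center G) :
    powSub n hc ≤ center G := fun x hx => hc x hx

theorem normal_of_le_center {H : Subgroup G} (h : H ≤ center G) : H.Normal := by
  constructor
  intro x hx g
  have hx' := Subgroup.mem_center_iff.mp (h hx) g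
  have : g * x * g⁻¹ = x := by rw [hx']; group
  rwa [this]

theorem center_coe_mem {M : Subgroup G} {x : G} (hx : x ∈ center G) (hxM : x ∈ M) :
    (⟨x, hxM⟩ : M) ∈ center M := by
  rw [Subgroup.mem_center_iff]
  intro g
  apply Subtype.ext
  push_cast
  exact Subgroup.mem_center_iff.mp hx g

theorem pc_subgroup {n : ℕ} (hc : ∀ x : G, x ^ n = 1 → x ∈ center G) (M : Subgroup G) :
    ∀ y : M, y ^ n = 1 → y ∈ center M := by
  intro y hy
  have hy' : (y : G) ^ n = 1 := by exact_mod_cast congrArg (Subtype.val) hy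
  exact center_coe_mem (hc _ hy') y.2

theorem coe_pow_one {M : Subgroup G} {y : M} {n : ℕ} (h : (y : G) ^ n = 1) : y ^ n = 1 := by
  apply Subtype.ext
  push_cast
  exact h

theorem mk_mem_center_of (W : Subgroup G) [W.Normal] {x : G}
    (h : ∀ g : G, x⁻¹ * g⁻¹ * x * g ∈ W) : (x : G ⧸ W) ∈ center (G ⧸ W) := by
  rw [Subgroup.mem_center_iff]
  intro b
  refine QuotientGroup.induction_on b ?_
  intro g
  show (g : G ⧸ W) * (x : G ⧸ W) = (x : G ⧸ W) * (g : G ⧸ W)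
  rw [← QuotientGroup.mk_mul, ← QuotientGroup.mk_mul]
  refine QuotientGroup.eq.mpr ?_
  have e : (g * x)⁻¹ * (x * g) = x⁻¹ * g⁻¹ * x * g := by group
  rw [e]; exact h g

theorem center_mk (W : Subgroup G) [W.Normal] {x : G} (h : x ∈ center G) :
    (x : G ⧸ W) ∈ center (G ⧸ W) := by
  refine mk_mem_center_of W ?_
  intro g
  have hg : g * x = x * g := Subgroup.mem_center_iff.mp h g
  have e : x⁻¹ * g⁻¹ * x * g = x⁻¹ * g⁻¹ * (x * g) := by group
  rw [e, ← hg]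
  have e2 : x⁻¹ * g⁻¹ * (g * x) = 1 := by group
  rw [e2]; exact W.one_mem

theorem comm_mem_of_center_mk {W : Subgroup G} [W.Normal] {x : G}
    (h : (x : G ⧸ W) ∈ center (G ⧸ W)) (g : G) : x⁻¹ * g⁻¹ * x * g ∈ W := by
  have := Subgroup.mem_center_iff.mp h (g : G ⧸ W)
  rw [← QuotientGroup.mk_mul, ← QuotientGroup.mk_mul] at this
  have := QuotientGroup.eq.mp this
  have e : (g * x)⁻¹ * (x * g) = x⁻¹ * g⁻¹ * x * g := by group
  rwa [e] at this

theorem mk_pow (W : Subgroup G) [W.Normal] (x : G) (n : ℕ) :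
    ((x ^ n : G) : G ⧸ W) = (x : G ⧸ W) ^ n := by
  induction n with
  | zero => simp
  | succ n ih => rw [pow_succ, pow_succ, QuotientGroup.mk_mul, ih]

theorem pow_right_comm19 {a b z : G} (hz : z ∈ center G) (h : b * a = a * b * z) (n : ℕ) :
    b ^ n * a = a * b ^ n * z ^ n := by
  have hzc : ∀ w : G, Commute z w := fun w => (Subgroup.mem_center_iff.mp hz w).symm
  induction n with
  | zero => simp
  | succ n ih =>
    calc b ^ (n+1) * a = b ^ n * (b * a) := by rw [pow_succ, mul_assoc]
    _ = b ^ n * (a * b * z) := by rw [h]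
    _ = (b ^ n * a) * (b * z) := by simp [mul_assoc]
    _ = (a * b ^ n * z ^ n) * (b * z) := by rw [ih]
    _ = a * b ^ n * (z ^ n * b) * z := by simp [mul_assoc]
    _ = a * b ^ n * (b * z ^ n) * z := by rw [((hzc b).symm.pow_right n).eq]
    _ = a * b ^ (n+1) * z ^ (n+1) := by simp [mul_assoc, pow_succ]

theorem exchange_pow {a b z : G} (hz : z ∈ center G) (h : b * a = a * b * z) (n : ℕ) :
    (a * b) ^ n = a ^ n * b ^ n * z ^ (n.choose 2) := by
  have hzc : ∀ w : G, Commute z w := fun w => (Subgroup.mem_center_iff.mp hz w).symm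
  induction n with
  | zero => simp
  | succ n ih =>
    have hch : (n+1).choose 2 = n + n.choose 2 := by
      rw [Nat.choose_succ_succ n 1, Nat.choose_one_right]
    calc (a*b)^(n+1) = (a*b)^n * (a*b) := by rw [pow_succ]
    _ = a^n * b^n * z^(n.choose 2) * (a * b) := by rw [ih]
    _ = a^n * (b^n * (z^(n.choose 2) * a)) * b := by simp [mul_assoc]
    _ = a^n * (b^n * (a * z^(n.choose 2))) * b := by rw [((hzc a).pow_left (n.choose 2)).eq]
    _ = a^n * (b^n * a) * (z^(n.choose 2) * b) := by simp [mul_assoc]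
    _ = a^n * (b^n * a) * (b * z^(n.choose 2)) := by rw [((hzc b).pow_left (n.choose 2)).eq]
    _ = a^n * (a * b^n * z^n) * (b * z^(n.choose 2)) := by rw [pow_right_comm19 hz h]
    _ = a^(n+1) * b^n * ((z^n * b) * z^(n.choose 2)) := by simp [mul_assoc, pow_succ]
    _ = a^(n+1) * b^n * ((b * z^n) * z^(n.choose 2)) := by rw [((hzc b).symm.pow_right n).eq]
    _ = a^(n+1) * b^(n+1) * z^((n+1).choose 2) := by
        rw [hch]
        simp [mul_assoc, pow_succ, pow_add]

theorem odd_choose_two {p k : ℕ} (hp : p = 2 * k + 1) : p.choose 2 = p * k := by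
  subst hp
  rw [Nat.choose_two_right]
  have h1 : 2 * k + 1 - 1 = 2 * k := by omega
  rw [h1]
  have h2 : (2 * k + 1) * (2 * k) = ((2 * k + 1) * k) * 2 := by ring
  rw [h2, Nat.mul_div_cancel _ (by norm_num)]

theorem pow_choose_two_eq_one {z : G} {p k : ℕ} (hp : p = 2 * k + 1) (hz : z ^ p = 1) :
    z ^ (p.choose 2) = 1 := by
  rw [odd_choose_two hp, pow_mul, hz, one_pow]

theorem exists_order_p {p : ℕ} (hp1 : 1 < p) (hpg : IsPGroup p G) {x : G} (hx : x ≠ 1) :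
    ∃ w : G, w ≠ 1 ∧ w ^ p = 1 := by
  obtain ⟨k, hk⟩ := hpg x
  clear hpg
  induction k generalizing x with
  | zero => simp at hk; exact absurd hk hx
  | succ k ih =>
    by_cases h : x ^ (p ^ k) = 1
    · exact ih hx h
    · refine ⟨x ^ (p ^ k), h, ?_⟩
      rw [← pow_mul, ← pow_succ]; exact hk

theorem card_subgroup_lt19 [Finite G] {M : Subgroup G} (h : M ≠ ⊤) :
    Nat.card M < Nat.card G := by
  have hne : (M : Set G) ≠ Set.univ := by
    intro heq
    exact h (by rwa [← Subgroup.coe_eq_univ])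
  have h1 : (M : Set G) ⊂ Set.univ := ⟨Set.subset_univ _, fun hsub => hne (Set.Subset.antisymm (Set.subset_univ _) hsub)⟩
  have h2 := Set.ncard_lt_ncard h1 (Set.toFinite _)
  rwa [Set.ncard_univ, ← Nat.card_coe_set_eq] at h2

theorem card_quotient_lt19 [Finite G] {W : Subgroup G} [W.Normal] (h : W ≠ ⊥) :
    Nat.card (G ⧸ W) < Nat.card G := by
  have h1 := Subgroup.card_eq_card_quotient_mul_card_subgroup W
  have h2 : 1 < Nat.card W := (Subgroup.one_lt_card_iff_ne_bot _).mpr h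
  have h3 : 0 < Nat.card (G ⧸ W) := Nat.card_pos
  calc Nat.card (G ⧸ W) = Nat.card (G ⧸ W) * 1 := (mul_one _).symm
  _ < Nat.card (G ⧸ W) * Nat.card W := (Nat.mul_lt_mul_left h3).mpr h2
  _ = Nat.card G := h1.symm

theorem exists_coatom19 [Finite G] {H : Subgroup G} (h : H ≠ ⊤) :
    ∃ M : Subgroup G, H ≤ M ∧ IsCoatom M := by
  haveI : Finite (Subgroup G) := Finite.of_injective (fun M => (M : Set G)) SetLike.coe_injective
  rcases eq_top_or_exists_le_coatom H with h1 | ⟨M, hM, hle⟩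
  · exact absurd h1 h
  · exact ⟨M, hle, hM⟩

theorem coatom_normal19 {p : ℕ} (hp : p.Prime) [Finite G] (hpg : IsPGroup p G)
    {M : Subgroup G} (hM : IsCoatom M) : M.Normal := by
  haveI : Fact p.Prime := ⟨hp⟩
  haveI : Group.IsNilpotent G := hpg.isNilpotent
  exact NormalizerCondition.normal_of_coatom (H := M) normalizerCondition_of_isNilpotent hM

theorem conj_central19 {s : G} (hs : s ∈ center G) (g : G) : g⁻¹ * s * g = s := by
  have h := Subgroup.mem_center_iff.mp hs g
  calc g⁻¹ * s * g = g⁻¹ * (s * g) := by group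
  _ = g⁻¹ * (g * s) := by rw [← h]
  _ = s := by group

theorem conj_pow_eq19 {x g : G} {n : ℕ} (h : x ^ n ∈ center G) :
    (g⁻¹ * x * g) ^ n = x ^ n := by
  have e : g⁻¹ * x * g = g⁻¹ * x * (g⁻¹)⁻¹ := by rw [inv_inv]
  rw [e, conj_pow, inv_inv]
  exact conj_central19 h g

theorem Ap19 (p : ℕ) (hp : p.Prime) (hodd : Odd p) :
    ∀ (n : ℕ) (G : Type u) [Group G] [Finite G], Nat.card G ≤ n →
      IsPGroup p G → (∀ x : G, x ^ p = 1 → x ∈ Subgroup.center G) →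
      ∀ u v : G, u ^ p ∈ Subgroup.center G → u ^ p = v ^ p → (u⁻¹ * v) ^ p = 1 := by
  intro n
  induction n with
  | zero =>
    intro G _ _ hcard
    exact absurd hcard (by have : 0 < Nat.card G := Nat.card_pos; omega)
  | succ n ih =>
    intro G _ _ hcard hpg hc u v hus huv
    by_cases hsub : ∀ a b : G, a = b
    · rw [hsub (u⁻¹ * v) 1, one_pow]
    · push_neg at hsub
      obtain ⟨a0, b0, hab0⟩ := hsub
      haveI : Nontrivial G := ⟨⟨a0, b0, hab0⟩⟩
      set W : Subgroup G := powSub p hc with hWdef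
      haveI hWn : W.Normal := normal_of_le_center (powSub_le_center hc)
      obtain ⟨w, hw1, hwp⟩ := exists_order_p hp.one_lt hpg (x := a0 * b0⁻¹)
        (by intro h; exact hab0 (by rwa [mul_inv_eq_one] at h))
      have hWbot : W ≠ ⊥ := by
        intro h
        exact hw1 (by have : w ∈ W := hwp; rwa [h, Subgroup.mem_bot] at this)
      -- Step 1: the quotient G/W is p-central (pointwise form)
      have PCbar : ∀ x : G, x ^ p ∈ W → ∀ g : G, x⁻¹ * g⁻¹ * x * g ∈ W := by
        intro x hxp g
        by_cases hcyc : Subgroup.zpowers x = ⊤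
        · have hg : g ∈ Subgroup.zpowers x := hcyc ▸ Subgroup.mem_top g
          obtain ⟨k, hk⟩ := hg
          have hcomm : x * g = g * x := by
            rw [← hk]; exact ((Commute.refl x).zpow_right k).eq
          have e : x⁻¹ * g⁻¹ * x * g = x⁻¹ * g⁻¹ * (x * g) := by group
          rw [e, hcomm]
          have e2 : x⁻¹ * g⁻¹ * (g * x) = 1 := by group
          rw [e2]; exact W.one_mem
        · obtain ⟨M, hle, hcoatom⟩ := exists_coatom19 hcyc
          haveI : M.Normal := coatom_normal19 hp hpg hcoatom
          have hxM : x ∈ M := hle (Subgroup.mem_zpowers x)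
          have hxgM : g⁻¹ * x * g ∈ M := by
            have := ‹M.Normal›.conj_mem x hxM g⁻¹
            rwa [inv_inv] at this
          have hMcard : Nat.card M ≤ n := by
            have := card_subgroup_lt19 hcoatom.1
            omega
          have hxpc : x ^ p ∈ Subgroup.center G := powSub_le_center hc hxp
          have h1 : ((⟨x, hxM⟩ : M)) ^ p ∈ Subgroup.center M := by
            have e : ((⟨x, hxM⟩ : M)) ^ p = (⟨x ^ p, M.pow_mem hxM p⟩ : M) := by
              apply Subtype.ext; push_cast; rfl
            rw [e]
            exact center_coe_mem hxpc _
          have h2 : ((⟨x, hxM⟩ : M)) ^ p = ((⟨g⁻¹ * x * g, hxgM⟩ : M)) ^ p := by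
            apply Subtype.ext
            push_cast
            rw [conj_pow_eq19 hxpc]
          have happ := ih M hMcard (hpg.to_subgroup M) (pc_subgroup hc M)
            ⟨x, hxM⟩ ⟨g⁻¹ * x * g, hxgM⟩ h1 h2
          have hcoe : (x⁻¹ * (g⁻¹ * x * g)) ^ p = 1 := by
            have := congrArg (Subtype.val) happ
            push_cast at this
            exact this
          have e : x⁻¹ * g⁻¹ * x * g = x⁻¹ * (g⁻¹ * x * g) := by group
          show (x⁻¹ * g⁻¹ * x * g) ^ p = 1
          rw [e]; exact hcoe
      have PCq : ∀ y : G ⧸ W, y ^ p = 1 → y ∈ Subgroup.center (G ⧸ W) := by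
        intro y
        refine QuotientGroup.induction_on y ?_
        intro z hz
        rw [← mk_pow, QuotientGroup.eq_one_iff] at hz
        exact mk_mem_center_of W (PCbar z hz)
      -- Step 2: apply the induction hypothesis in the quotient
      have hqcard : Nat.card (G ⧸ W) ≤ n := by
        have := card_quotient_lt19 hWbot
        omega
      have hq := ih (G ⧸ W) hqcard (hpg.to_quotient W) PCq
        (u : G ⧸ W) (v : G ⧸ W)
        (by rw [← mk_pow]; exact center_mk W hus)
        (by rw [← mk_pow, ← mk_pow, huv])
      set d : G := u⁻¹ * v with hd
      have hdp : d ^ p ∈ W := by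
        rw [← QuotientGroup.eq_one_iff (G := G) (N := W), mk_pow]
        show ((u⁻¹ * v : G) : G ⧸ W) ^ p = 1
        rw [QuotientGroup.mk_mul, QuotientGroup.mk_inv]
        exact hq
      have hdcen : ((d : G ⧸ W)) ∈ Subgroup.center (G ⧸ W) := by
        refine PCq _ ?_
        rw [← mk_pow, QuotientGroup.eq_one_iff]
        exact hdp
      -- Step 3: conclude
      set z : G := (u * d)⁻¹ * (d * u) with hz
      have hzW : z ∈ W := by
        have h1 := Subgroup.mem_center_iff.mp hdcen (u : G ⧸ W)
        rw [← QuotientGroup.mk_mul, ← QuotientGroup.mk_mul] at h1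
        have h2 := QuotientGroup.eq.mp h1
        exact h2
      have hzc : z ∈ Subgroup.center G := powSub_le_center hc hzW
      have hcomm : d * u = u * d * z := by rw [hz]; group
      have hexp := exchange_pow hzc hcomm p
      have hud : u * d = v := by rw [hd]; group
      rw [hud] at hexp
      obtain ⟨k, hk⟩ := hodd
      have hzp : z ^ p = 1 := mem_powSub.mp hzW
      have hzch : z ^ (p.choose 2) = 1 := pow_choose_two_eq_one hk hzp
      rw [hzch, mul_one] at hexp
      have hcan : u ^ p * d ^ p = u ^ p * 1 := by
        rw [mul_one, ← hexp, ← huv]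
      exact mul_left_cancel hcan

instance powSub_normal19 {G : Type u} [Group G] (n : ℕ)
    (hc : ∀ x : G, x ^ n = 1 → x ∈ center G) : (powSub n hc).Normal :=
  normal_of_le_center (powSub_le_center hc)

theorem pair_comm19 (p : ℕ) (hp : p.Prime) (hodd : Odd p) {G : Type u} [Group G] [Finite G]
    (hpg : IsPGroup p G) (hc : ∀ x : G, x ^ p = 1 → x ∈ center G)
    {x : G} (hx : x ^ p ∈ center G) (g : G) : x⁻¹ * g⁻¹ * x * g ∈ powSub p hc := by
  have h := Ap19 p hp hodd (Nat.card G) G le_rfl hpg hc x (g⁻¹ * x * g) hx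
    (conj_pow_eq19 hx).symm
  rw [mem_powSub]
  have e : x⁻¹ * g⁻¹ * x * g = x⁻¹ * (g⁻¹ * x * g) := by group
  rw [e]
  exact h

theorem Buck19 (p : ℕ) (hp : p.Prime) (hodd : Odd p) {G : Type u} [Group G] [Finite G]
    (hpg : IsPGroup p G) (hc : ∀ x : G, x ^ p = 1 → x ∈ center G) :
    ∀ y : G ⧸ powSub p hc, y ^ p = 1 → y ∈ center (G ⧸ powSub p hc) := by
  intro y
  refine QuotientGroup.induction_on y ?_
  intro x hx
  rw [← mk_pow, QuotientGroup.eq_one_iff] at hx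
  exact mk_mem_center_of _ (pair_comm19 p hp hodd hpg hc (powSub_le_center hc hx))

theorem Mo19 (p : ℕ) (hp : p.Prime) (hodd : Odd p) :
    ∀ (e : ℕ) (G : Type u) [Group G] [Finite G], IsPGroup p G →
      (∀ x : G, x ^ p = 1 → x ∈ center G) →
      (∀ x : G, x ^ (p ^ e) ∈ center G) →
      ∀ x y : G, (x * y) ^ (p ^ e) = x ^ (p ^ e) * y ^ (p ^ e) := by
  intro e
  induction e with
  | zero => intro G _ _ _ _ _ x y; simp
  | succ e ih =>
    intro G _ _ hpg hc hpow x y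
    obtain ⟨k, hk⟩ := id hodd
    set W : Subgroup G := powSub p hc with hWdef
    have hcq := Buck19 p hp hodd hpg hc
    have hstep : ∀ z : G, z ^ (p ^ e) * (z ^ (p ^ e)) ^ (p - 1) = 1 → True := fun _ _ => trivial
    have hppow : ∀ z : G, (z ^ (p ^ e)) ^ p = z ^ (p ^ (e + 1)) := by
      intro z; rw [← pow_mul, ← pow_succ]
    have hpowq : ∀ xq : G ⧸ W, xq ^ (p ^ e) ∈ center (G ⧸ W) := by
      intro xq
      refine QuotientGroup.induction_on xq ?_
      intro z
      rw [← mk_pow]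
      refine mk_mem_center_of _ ?_
      intro g
      refine pair_comm19 p hp hodd hpg hc ?_ g
      rw [hppow]
      exact hpow z
    have IH := ih (G ⧸ W) (hpg.to_quotient W) hcq hpowq (x : G ⧸ W) (y : G ⧸ W)
    have hωW : (x ^ (p ^ e) * y ^ (p ^ e))⁻¹ * (x * y) ^ (p ^ e) ∈ W := by
      refine QuotientGroup.eq.mp ?_
      show ((x ^ (p ^ e) * y ^ (p ^ e) : G) : G ⧸ W) = (((x * y) ^ (p ^ e) : G) : G ⧸ W)
      simp only [QuotientGroup.mk_mul, mk_pow]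
      exact IH.symm
    set a : G := x ^ (p ^ e) with ha
    set b : G := y ^ (p ^ e) with hb
    set ω : G := (a * b)⁻¹ * (x * y) ^ (p ^ e) with hω
    have hωc : ω ∈ center G := powSub_le_center hc hωW
    have hωp : ω ^ p = 1 := mem_powSub.mp hωW
    have hapc : a ^ p ∈ center G := by rw [ha, hppow]; exact hpow x
    have hzW : (a * b)⁻¹ * (b * a) ∈ W := by
      have h1 := pair_comm19 p hp hodd hpg hc hapc b
      have h2 := W.inv_mem h1
      have e2 : (a⁻¹ * b⁻¹ * a * b)⁻¹ = (a * b)⁻¹ * (b * a) := by group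
      rwa [e2] at h2
    set z : G := (a * b)⁻¹ * (b * a) with hz
    have hzc : z ∈ center G := powSub_le_center hc hzW
    have hzp : z ^ p = 1 := mem_powSub.mp hzW
    have hcommz : b * a = a * b * z := by rw [hz]; group
    have habω : (x * y) ^ (p ^ e) = a * b * ω := by rw [hω]; group
    have hcωab : Commute (a * b) ω :=
      Subgroup.mem_center_iff.mp hωc (a * b)
    calc (x * y) ^ (p ^ (e + 1)) = ((x * y) ^ (p ^ e)) ^ p := (hppow (x * y)).symm
    _ = (a * b * ω) ^ p := by rw [habω]
    _ = (a * b) ^ p * ω ^ p := hcωab.mul_pow p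
    _ = (a * b) ^ p := by rw [hωp, mul_one]
    _ = a ^ p * b ^ p * z ^ (p.choose 2) := exchange_pow hzc hcommz p
    _ = a ^ p * b ^ p := by rw [pow_choose_two_eq_one hk hzp, mul_one]
    _ = x ^ (p ^ (e + 1)) * y ^ (p ^ (e + 1)) := by rw [ha, hb, hppow, hppow]

/-! ### The `p = 2` case -/

theorem pcOfpc2 {G : Type u} [Group G] (hc : ∀ x : G, x ^ 4 = 1 → x ∈ center G) :
    ∀ x : G, x ^ 2 = 1 → x ∈ center G := by
  intro x h
  refine hc x ?_
  have h4 : (4 : ℕ) = 2 * 2 := rfl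
  rw [h4, pow_mul, h, one_pow]

theorem sq_four_pow {G : Type u} [Group G] {x : G} (h : (x ^ 4) ^ 2 = 1) : (x ^ 2) ^ 4 = 1 := by
  have e : (x ^ 2) ^ 4 = (x ^ 4) ^ 2 := by
    rw [← pow_mul, ← pow_mul]
  rw [e, h]

theorem A2x :
    ∀ (n : ℕ) (G : Type u) [Group G] [Finite G], Nat.card G ≤ n →
      IsPGroup 2 G → (∀ x : G, x ^ 4 = 1 → x ∈ Subgroup.center G) →
      ∀ u v : G, u ^ 2 ∈ Subgroup.center G → u ^ 2 = v ^ 2 → (u⁻¹ * v) ^ 2 = 1 := by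
  intro n
  induction n with
  | zero =>
    intro G _ _ hcard
    exact absurd hcard (by have : 0 < Nat.card G := Nat.card_pos; omega)
  | succ n ih =>
    intro G _ _ hcard hpg hc u v hus huv
    by_cases hsub : ∀ a b : G, a = b
    · rw [hsub (u⁻¹ * v) 1, one_pow]
    · push_neg at hsub
      obtain ⟨a0, b0, hab0⟩ := hsub
      haveI : Nontrivial G := ⟨⟨a0, b0, hab0⟩⟩
      set W : Subgroup G := powSub 2 (pcOfpc2 hc) with hWdef
      obtain ⟨w, hw1, hwp⟩ := exists_order_p (p := 2) (by norm_num) hpg (x := a0 * b0⁻¹)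
        (by intro h; exact hab0 (by rwa [mul_inv_eq_one] at h))
      have hWbot : W ≠ ⊥ := by
        intro h
        exact hw1 (by have : w ∈ W := hwp; rwa [h, Subgroup.mem_bot] at this)
      -- Step 1: the quotient G/W is 2-central (pointwise form)
      have PCbar : ∀ x : G, x ^ 4 ∈ W → ∀ g : G, x⁻¹ * g⁻¹ * x * g ∈ W := by
        intro x hxp g
        have hx2c : x ^ 2 ∈ Subgroup.center G :=
          hc (x ^ 2) (sq_four_pow (mem_powSub.mp hxp))
        by_cases hcyc : Subgroup.zpowers x = ⊤
        · have hg : g ∈ Subgroup.zpowers x := hcyc ▸ Subgroup.mem_top g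
          obtain ⟨k, hk⟩ := hg
          have hcomm : x * g = g * x := by
            rw [← hk]; exact ((Commute.refl x).zpow_right k).eq
          have e : x⁻¹ * g⁻¹ * x * g = x⁻¹ * g⁻¹ * (x * g) := by group
          rw [e, hcomm]
          have e2 : x⁻¹ * g⁻¹ * (g * x) = 1 := by group
          rw [e2]; exact W.one_mem
        · obtain ⟨M, hle, hcoatom⟩ := exists_coatom19 hcyc
          haveI : M.Normal := coatom_normal19 (by norm_num) hpg hcoatom
          have hxM : x ∈ M := hle (Subgroup.mem_zpowers x)
          have hxgM : g⁻¹ * x * g ∈ M := by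
            have := ‹M.Normal›.conj_mem x hxM g⁻¹
            rwa [inv_inv] at this
          have hMcard : Nat.card M ≤ n := by
            have := card_subgroup_lt19 hcoatom.1
            omega
          have h1 : ((⟨x, hxM⟩ : M)) ^ 2 ∈ Subgroup.center M := by
            have e : ((⟨x, hxM⟩ : M)) ^ 2 = (⟨x ^ 2, M.pow_mem hxM 2⟩ : M) := by
              apply Subtype.ext; push_cast; rfl
            rw [e]
            exact center_coe_mem hx2c _
          have h2 : ((⟨x, hxM⟩ : M)) ^ 2 = ((⟨g⁻¹ * x * g, hxgM⟩ : M)) ^ 2 := by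
            apply Subtype.ext
            push_cast
            rw [conj_pow_eq19 hx2c]
          have happ := ih M hMcard (hpg.to_subgroup M) (pc_subgroup hc M)
            ⟨x, hxM⟩ ⟨g⁻¹ * x * g, hxgM⟩ h1 h2
          have hcoe : (x⁻¹ * (g⁻¹ * x * g)) ^ 2 = 1 := by
            have := congrArg (Subtype.val) happ
            push_cast at this
            exact this
          have e : x⁻¹ * g⁻¹ * x * g = x⁻¹ * (g⁻¹ * x * g) := by group
          show (x⁻¹ * g⁻¹ * x * g) ^ 2 = 1
          rw [e]; exact hcoe
      have PCq : ∀ y : G ⧸ W, y ^ 4 = 1 → y ∈ Subgroup.center (G ⧸ W) := by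
        intro y
        refine QuotientGroup.induction_on y ?_
        intro z hz
        rw [← mk_pow, QuotientGroup.eq_one_iff] at hz
        exact mk_mem_center_of W (PCbar z hz)
      have hqcard : Nat.card (G ⧸ W) ≤ n := by
        have := card_quotient_lt19 hWbot
        omega
      have hq := ih (G ⧸ W) hqcard (hpg.to_quotient W) PCq
        (u : G ⧸ W) (v : G ⧸ W)
        (by rw [← mk_pow]; exact center_mk W hus)
        (by rw [← mk_pow, ← mk_pow, huv])
      set d : G := u⁻¹ * v with hd
      have hd2 : d ^ 2 ∈ W := by
        rw [← QuotientGroup.eq_one_iff (G := G) (N := W), mk_pow]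
        show ((u⁻¹ * v : G) : G ⧸ W) ^ 2 = 1
        rw [QuotientGroup.mk_mul, QuotientGroup.mk_inv]
        exact hq
      have hd4 : d ^ 4 = 1 := by
        have h := mem_powSub.mp hd2
        calc d ^ 4 = (d ^ 2) ^ 2 := by rw [← pow_mul]
        _ = 1 := h
      have hdc : d ∈ Subgroup.center G := hc d hd4
      have hcomm : Commute u d := Subgroup.mem_center_iff.mp hdc u
      have hv : u * d = v := by rw [hd]; group
      have hv2 : v ^ 2 = u ^ 2 * d ^ 2 := by rw [← hv, hcomm.mul_pow]
      have hcan : u ^ 2 * d ^ 2 = u ^ 2 * 1 := by rw [mul_one, ← hv2, ← huv]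
      exact mul_left_cancel hcan

theorem pair2 {G : Type u} [Group G] [Finite G]
    (hpg : IsPGroup 2 G) (hc : ∀ x : G, x ^ 4 = 1 → x ∈ center G)
    {x : G} (hx : x ^ 2 ∈ center G) (g : G) :
    x⁻¹ * g⁻¹ * x * g ∈ powSub 2 (pcOfpc2 hc) := by
  have h := A2x (Nat.card G) G le_rfl hpg hc x (g⁻¹ * x * g) hx (conj_pow_eq19 hx).symm
  rw [mem_powSub]
  have e : x⁻¹ * g⁻¹ * x * g = x⁻¹ * (g⁻¹ * x * g) := by group
  rw [e]
  exact h

theorem Buck2 {G : Type u} [Group G] [Finite G]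
    (hpg : IsPGroup 2 G) (hc : ∀ x : G, x ^ 4 = 1 → x ∈ center G) :
    ∀ y : G ⧸ powSub 2 (pcOfpc2 hc), y ^ 4 = 1 →
      y ∈ center (G ⧸ powSub 2 (pcOfpc2 hc)) := by
  intro y
  refine QuotientGroup.induction_on y ?_
  intro x hx
  rw [← mk_pow, QuotientGroup.eq_one_iff] at hx
  have hx2c : x ^ 2 ∈ center G := hc (x ^ 2) (sq_four_pow (mem_powSub.mp hx))
  exact mk_mem_center_of _ (pair2 hpg hc hx2c)

/-- If `a * c = c * a * m` with `m` central of order dividing 2, then `a` commutes with `c * c`. -/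
theorem commute_sq19 {G : Type u} [Group G] {a c m : G} (hm : m ∈ center G) (hm2 : m ^ 2 = 1)
    (h : a * c = c * a * m) : a * (c * c) = (c * c) * a := by
  have hmc : ∀ w : G, w * m = m * w := fun w => Subgroup.mem_center_iff.mp hm w
  calc a * (c * c) = (a * c) * c := by rw [mul_assoc]
  _ = (c * a * m) * c := by rw [h]
  _ = (c * a) * (m * c) := by simp [mul_assoc]
  _ = (c * a) * (c * m) := by rw [← hmc c]
  _ = c * ((a * c) * m) := by simp [mul_assoc]
  _ = c * ((c * a * m) * m) := by rw [h]
  _ = (c * c) * a * (m * m) := by simp [mul_assoc]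
  _ = (c * c) * a := by
      have : m * m = 1 := by rw [← pow_two]; exact hm2
      rw [this, mul_one]

theorem flip_comm19 {G : Type u} [Group G] {a c m : G} (hm : m ∈ center G) (hm2 : m ^ 2 = 1)
    (h : a * c = c * a * m) : c * a = a * c * m := by
  have : a * c * m = c * a * (m * m) := by rw [h]; simp [mul_assoc]
  have hmm : m * m = 1 := by rw [← pow_two]; exact hm2
  rw [this, hmm, mul_one]

/-- From `x⁻¹ * g⁻¹ * x * g = m` we get `x * g = g * x * m'` for `m' = conjugated m`;
    here we derive the commutation relation needed. -/
theorem comm_rel19 {G : Type u} [Group G] {x g m : G} (hm : m ∈ center G)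
    (h : x⁻¹ * g⁻¹ * x * g = m) : x * g = g * x * m := by
  have hmc : ∀ w : G, w * m = m * w := fun w => Subgroup.mem_center_iff.mp hm w
  have : g⁻¹ * x * g = x * m := by
    rw [← h]; group
  calc x * g = g * (g⁻¹ * x * g) := by group
  _ = g * (x * m) := by rw [this]
  _ = g * x * m := by rw [mul_assoc]

theorem Y2 :
    ∀ (e : ℕ) (G : Type u) [Group G] [Finite G], IsPGroup 2 G →
      (∀ x : G, x ^ 4 = 1 → x ∈ center G) →
      (∀ x : G, x ^ (2 ^ e) ∈ center G) →
      ∀ x y : G, ((x ^ (2 ^ e) * y ^ (2 ^ e))⁻¹ * (x * y) ^ (2 ^ e)) ^ 2 = 1 := by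
  intro e
  induction e with
  | zero =>
    intro G _ _ _ _ _ x y
    have h : (x ^ (2 ^ 0) * y ^ (2 ^ 0))⁻¹ * (x * y) ^ (2 ^ 0) = 1 := by
      simp only [pow_zero, pow_one]; group
    rw [h, one_pow]
  | succ e ih =>
    intro G _ _ hpg hc hpow x y
    set W : Subgroup G := powSub 2 (pcOfpc2 hc) with hWdef
    have h2pow : ∀ (z : G) (j : ℕ), (z ^ (2 ^ j)) ^ 2 = z ^ (2 ^ (j + 1)) := by
      intro z j; rw [← pow_mul, ← pow_succ]
    have hcq := Buck2 hpg hc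
    have hpowq : ∀ xq : G ⧸ W, xq ^ (2 ^ e) ∈ center (G ⧸ W) := by
      intro xq
      refine QuotientGroup.induction_on xq ?_
      intro z
      rw [← mk_pow]
      refine mk_mem_center_of _ ?_
      intro g
      refine pair2 hpg hc ?_ g
      rw [h2pow]
      exact hpow z
    have IH := ih (G ⧸ W) (hpg.to_quotient W) hcq hpowq (x : G ⧸ W) (y : G ⧸ W)
    set a : G := x ^ (2 ^ e) with ha
    set b : G := y ^ (2 ^ e) with hb
    set ω : G := (a * b)⁻¹ * (x * y) ^ (2 ^ e) with hω
    have hmkω : ((ω : G) : G ⧸ W) ^ 2 = 1 := by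
      show ((((x ^ (2 ^ e) * y ^ (2 ^ e))⁻¹ * (x * y) ^ (2 ^ e)) : G) : G ⧸ W) ^ 2 = 1
      simp only [QuotientGroup.mk_mul, QuotientGroup.mk_inv, mk_pow]
      exact IH
    have hω2W : ω ^ 2 ∈ W := by
      rw [← QuotientGroup.eq_one_iff (G := G) (N := W), mk_pow]
      exact hmkω
    have hω4 : ω ^ 4 = 1 := by
      have h := mem_powSub.mp hω2W
      calc ω ^ 4 = (ω ^ 2) ^ 2 := by rw [← pow_mul]
      _ = 1 := h
    have hωc : ω ∈ center G := hc ω hω4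
    have hapc : a ^ 2 ∈ center G := by rw [ha, h2pow]; exact hpow x
    have hzW : (a * b)⁻¹ * (b * a) ∈ W := by
      have h1 := pair2 hpg hc hapc b
      have h2 := W.inv_mem h1
      have e2 : (a⁻¹ * b⁻¹ * a * b)⁻¹ = (a * b)⁻¹ * (b * a) := by group
      rwa [e2] at h2
    set z : G := (a * b)⁻¹ * (b * a) with hz
    have hzc : z ∈ center G := powSub_le_center _ hzW
    have hz2 : z ^ 2 = 1 := mem_powSub.mp hzW
    have hcommz : b * a = a * b * z := by rw [hz]; group
    have habω : (x * y) ^ (2 ^ e) = a * b * ω := by rw [hω]; group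
    have hcωab : Commute (a * b) ω := Subgroup.mem_center_iff.mp hωc (a * b)
    have hchoose : (2 : ℕ).choose 2 = 1 := rfl
    have hE : (x * y) ^ (2 ^ (e + 1)) = (a ^ 2 * b ^ 2) * (z * ω ^ 2) := by
      calc (x * y) ^ (2 ^ (e + 1)) = ((x * y) ^ (2 ^ e)) ^ 2 := (h2pow (x * y) e).symm
      _ = (a * b * ω) ^ 2 := by rw [habω]
      _ = (a * b) ^ 2 * ω ^ 2 := hcωab.mul_pow 2
      _ = (a ^ 2 * b ^ 2 * z ^ ((2:ℕ).choose 2)) * ω ^ 2 := by rw [exchange_pow hzc hcommz 2]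
      _ = (a ^ 2 * b ^ 2) * (z * ω ^ 2) := by rw [hchoose, pow_one, mul_assoc]
    have hxa : x ^ (2 ^ (e + 1)) = a ^ 2 := by rw [ha, h2pow]
    have hyb : y ^ (2 ^ (e + 1)) = b ^ 2 := by rw [hb, h2pow]
    rw [hxa, hyb, hE]
    have e3 : (a ^ 2 * b ^ 2)⁻¹ * ((a ^ 2 * b ^ 2) * (z * ω ^ 2)) = z * ω ^ 2 := by group
    rw [e3]
    have hcz : Commute z (ω ^ 2) := Subgroup.mem_center_iff.mp ((Subgroup.center G).pow_mem hωc 2) z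
    rw [hcz.mul_pow 2, hz2, one_mul, ← pow_mul]
    norm_num
    exact hω4

theorem B1 (e : ℕ) (G : Type u) [Group G] [Finite G] (hpg : IsPGroup 2 G)
    (hc : ∀ x : G, x ^ 4 = 1 → x ∈ center G)
    (hpow : ∀ x : G, x ^ (2 ^ e) ∈ center G) (x y : G) :
    (x * y) ^ (2 ^ (e + 1)) = x ^ (2 ^ (e + 1)) * y ^ (2 ^ (e + 1)) := by
  have h2pow : ∀ (z : G), (z ^ (2 ^ e)) ^ 2 = z ^ (2 ^ (e + 1)) := by
    intro z; rw [← pow_mul, ← pow_succ]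
  set a : G := x ^ (2 ^ e) with ha
  set b : G := y ^ (2 ^ e) with hb
  set β : G := (a * b)⁻¹ * (x * y) ^ (2 ^ e) with hβ
  have hβ2 : β ^ 2 = 1 := Y2 e G hpg hc hpow x y
  have hβ4 : β ^ 4 = 1 := by
    calc β ^ 4 = (β ^ 2) ^ 2 := by rw [← pow_mul]
    _ = 1 := by rw [hβ2, one_pow]
  have hβc : β ∈ center G := hc β hβ4
  have hac : a ∈ center G := hpow x
  have hab : Commute a b := Subgroup.mem_center_iff.mp hac b |>.symm
  have hcβab : Commute (a * b) β := Subgroup.mem_center_iff.mp hβc (a * b)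
  have habβ : (x * y) ^ (2 ^ e) = a * b * β := by rw [hβ]; group
  calc (x * y) ^ (2 ^ (e + 1)) = ((x * y) ^ (2 ^ e)) ^ 2 := (h2pow (x * y)).symm
  _ = (a * b * β) ^ 2 := by rw [habβ]
  _ = (a * b) ^ 2 * β ^ 2 := hcβab.mul_pow 2
  _ = (a * b) ^ 2 := by rw [hβ2, mul_one]
  _ = a ^ 2 * b ^ 2 := hab.mul_pow 2
  _ = x ^ (2 ^ (e + 1)) * y ^ (2 ^ (e + 1)) := by rw [ha, hb, h2pow, h2pow]

theorem Core2 :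
    ∀ (f : ℕ) (G : Type u) [Group G] [Finite G], IsPGroup 2 G →
      (∀ x : G, x ^ 4 = 1 → x ∈ center G) →
      (∀ x : G, x ^ (2 ^ (f + 1)) ∈ center G) →
      (∀ x y : G, (x * y) ^ (2 ^ (f + 1)) = x ^ (2 ^ (f + 1)) * y ^ (2 ^ (f + 1))) →
      ∀ t : G, t ^ (2 ^ f) ∈ center G := by
  intro f
  induction f with
  | zero =>
    intro G _ _ _ _ _ habel t
    rw [pow_zero, pow_one]
    rw [Subgroup.mem_center_iff]
    intro g
    have h := habel g t
    rw [pow_one] at h  -- no-op guard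
    have h' : (g * t) ^ 2 = g ^ 2 * t ^ 2 := habel g t
    have h1 : g * (t * (g * t)) = g * (g * (t * t)) := by
      have := h'
      rw [pow_two, pow_two, pow_two] at this
      simpa [mul_assoc] using this
    have h2 : t * (g * t) = g * (t * t) := mul_left_cancel h1
    have h3 : (t * g) * t = (g * t) * t := by simpa [mul_assoc] using h2
    exact (mul_right_cancel h3).symm
  | succ f ih =>
    intro G _ _ hpg hc hpow habel t
    set W : Subgroup G := powSub 2 (pcOfpc2 hc) with hWdef
    have hWc : W ≤ center G := powSub_le_center _
    have h2pow : ∀ (z : G) (j : ℕ), (z ^ (2 ^ j)) ^ 2 = z ^ (2 ^ (j + 1)) := by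
      intro z j; rw [← pow_mul, ← pow_succ]
    have hcq := Buck2 hpg hc
    have hpowq : ∀ xq : G ⧸ W, xq ^ (2 ^ (f + 1)) ∈ center (G ⧸ W) := by
      intro xq
      refine QuotientGroup.induction_on xq ?_
      intro z
      rw [← mk_pow]
      refine mk_mem_center_of _ ?_
      intro g
      refine pair2 hpg hc ?_ g
      rw [h2pow]
      exact hpow z
    -- the quotient is 2^(f+1)-abelian
    have habelq : ∀ xq yq : G ⧸ W, (xq * yq) ^ (2 ^ (f + 1)) =
        xq ^ (2 ^ (f + 1)) * yq ^ (2 ^ (f + 1)) := by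
      intro xq yq
      refine QuotientGroup.induction_on xq ?_
      intro x
      refine QuotientGroup.induction_on yq ?_
      intro y
      set a : G := x ^ (2 ^ (f + 1)) with ha
      set b : G := y ^ (2 ^ (f + 1)) with hb
      set c : G := y ^ (2 ^ f) with hcdef
      set ω : G := (a * b)⁻¹ * (x * y) ^ (2 ^ (f + 1)) with hω
      have hmkω : ((ω : G) : G ⧸ W) ^ 2 = 1 := by
        show ((((x ^ (2 ^ (f + 1)) * y ^ (2 ^ (f + 1)))⁻¹ * (x * y) ^ (2 ^ (f + 1))) : G) :
          G ⧸ W) ^ 2 = 1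
        simp only [QuotientGroup.mk_mul, QuotientGroup.mk_inv, mk_pow]
        exact Y2 (f + 1) (G ⧸ W) (hpg.to_quotient W) hcq hpowq (x : G ⧸ W) (y : G ⧸ W)
      have hω2W : ω ^ 2 ∈ W := by
        rw [← QuotientGroup.eq_one_iff (G := G) (N := W), mk_pow]
        exact hmkω
      have hω4 : ω ^ 4 = 1 := by
        have h := mem_powSub.mp hω2W
        calc ω ^ 4 = (ω ^ 2) ^ 2 := by rw [← pow_mul]
        _ = 1 := h
      have hωc : ω ∈ center G := hc ω hω4
      have hapc : a ^ 2 ∈ center G := by rw [ha, h2pow]; exact hpow x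
      -- a commutes with b = c * c
      have hbcc : b = c * c := by rw [hb, hcdef, ← pow_two, h2pow]
      have hmW : a⁻¹ * c⁻¹ * a * c ∈ W := pair2 hpg hc hapc c
      have hmc : a⁻¹ * c⁻¹ * a * c ∈ center G := hWc hmW
      have hm2 : (a⁻¹ * c⁻¹ * a * c) ^ 2 = 1 := mem_powSub.mp hmW
      have hrel : a * c = c * a * (a⁻¹ * c⁻¹ * a * c) := comm_rel19 hmc rfl
      have hab : Commute a b := by
        rw [hbcc]
        exact commute_sq19 hmc hm2 hrel
      have hcωab : Commute (a * b) ω := Subgroup.mem_center_iff.mp hωc (a * b)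
      have habω : (x * y) ^ (2 ^ (f + 1)) = a * b * ω := by rw [hω]; group
      -- use the 2^(f+2)-abelian hypothesis of G
      have hG : a ^ 2 * b ^ 2 * ω ^ 2 = a ^ 2 * b ^ 2 * 1 := by
        rw [mul_one]
        have h1 : (x * y) ^ (2 ^ (f + 1 + 1)) = x ^ (2 ^ (f + 1 + 1)) * y ^ (2 ^ (f + 1 + 1)) :=
          habel x y
        calc a ^ 2 * b ^ 2 * ω ^ 2 = (a * b) ^ 2 * ω ^ 2 := by rw [hab.mul_pow 2]
        _ = (a * b * ω) ^ 2 := (hcωab.mul_pow 2).symm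
        _ = ((x * y) ^ (2 ^ (f + 1))) ^ 2 := by rw [habω]
        _ = (x * y) ^ (2 ^ (f + 1 + 1)) := h2pow (x * y) (f + 1)
        _ = x ^ (2 ^ (f + 1 + 1)) * y ^ (2 ^ (f + 1 + 1)) := h1
        _ = a ^ 2 * b ^ 2 := by rw [ha, hb, h2pow, h2pow]
      have hω2 : ω ^ 2 = 1 := mul_left_cancel hG
      have hωW : ω ∈ W := mem_powSub.mpr hω2
      have hmk : ((a * b : G) : G ⧸ W) = (((x * y) ^ (2 ^ (f + 1)) : G) : G ⧸ W) :=
        QuotientGroup.eq.mpr hωW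
      show ((x : G ⧸ W) * (y : G ⧸ W)) ^ (2 ^ (f + 1)) = _
      rw [← QuotientGroup.mk_mul, ← mk_pow, ← hmk, QuotientGroup.mk_mul, mk_pow, mk_pow]
    -- apply the induction hypothesis in the quotient
    have IH := ih (G ⧸ W) (hpg.to_quotient W) hcq hpowq habelq
    -- extract centrality
    have hcent : ∀ g : G, (t ^ (2 ^ f))⁻¹ * g⁻¹ * (t ^ (2 ^ f)) * g ∈ W := by
      intro g
      have h1 := IH ((t : G ⧸ W))
      rw [← mk_pow] at h1
      exact comm_mem_of_center_mk h1 g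
    rw [Subgroup.mem_center_iff]
    intro g
    set c : G := t ^ (2 ^ f) with hcdef
    have hmW : c⁻¹ * g⁻¹ * c * g ∈ W := hcent g
    have hmc : c⁻¹ * g⁻¹ * c * g ∈ center G := hWc hmW
    have hm2 : (c⁻¹ * g⁻¹ * c * g) ^ 2 = 1 := mem_powSub.mp hmW
    have hrel : c * g = g * c * (c⁻¹ * g⁻¹ * c * g) := comm_rel19 hmc rfl
    have hflip : g * c = c * g * (c⁻¹ * g⁻¹ * c * g) := flip_comm19 hmc hm2 hrel
    have hcsq : g * (c * c) = (c * c) * g := commute_sq19 hmc hm2 hflip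
    have htc : t ^ (2 ^ (f + 1)) = c * c := by rw [hcdef, ← pow_two, h2pow]
    rw [htc]
    exact hcsq

end PCentralAux

theorem stmt_19 (p : ℕ) (hp : p.Prime) (G : Type*) [Group G] [Finite G]
    (hpg : IsPGroup p G) (hcent : IsPCentral p G)
    (e : ℕ) (he : Monoid.exponent (G ⧸ Subgroup.center G) = p ^ e) :
    (Odd p → ∀ x y : G, (x * y) ^ p ^ e = x ^ p ^ e * y ^ p ^ e) ∧
    (p = 2 → (∃ a b : G, a * b ≠ b * a) →
      ((∀ x y : G, (x * y) ^ 2 ^ (e + 1) = x ^ 2 ^ (e + 1) * y ^ 2 ^ (e + 1)) ∧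
        ∃ x y : G, (x * y) ^ 2 ^ e ≠ x ^ 2 ^ e * y ^ 2 ^ e)) := by
  have hpowgen : ∀ z : G, z ^ (p ^ e) ∈ Subgroup.center G := by
    intro z
    have h1 := Monoid.pow_exponent_eq_one ((z : G ⧸ Subgroup.center G))
    rw [he, ← PCentralAux.mk_pow] at h1
    exact (QuotientGroup.eq_one_iff _).mp h1
  constructor
  · -- odd case
    intro hodd x y
    have hp2 : p ≠ 2 := by
      rintro rfl
      rw [Nat.odd_iff] at hodd
      norm_num at hodd
    have hOm : Omega G p 1 ≤ Subgroup.center G := by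
      simpa [IsPCentral, hp2] using hcent
    have hc : ∀ z : G, z ^ p = 1 → z ∈ Subgroup.center G := by
      intro z hz
      refine hOm (Subgroup.subset_closure ?_)
      show z ^ (p ^ 1) = 1
      rwa [pow_one]
    exact PCentralAux.Mo19 p hp hodd e G hpg hc hpowgen x y
  · -- p = 2 case
    rintro rfl hnab
    have hOm : Omega G 2 2 ≤ Subgroup.center G := by
      simpa [IsPCentral] using hcent
    have hc : ∀ z : G, z ^ 4 = 1 → z ∈ Subgroup.center G := by
      intro z hz
      refine hOm (Subgroup.subset_closure ?_)
      show z ^ (2 ^ 2) = 1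
      exact hz
    constructor
    · exact fun x y => PCentralAux.B1 e G hpg hc hpowgen x y
    · by_contra hno
      push_neg at hno
      obtain ⟨a, b, hab⟩ := hnab
      rcases Nat.eq_zero_or_pos e with he0 | hepos
      · subst he0
        have hallc : ∀ z : G, z ∈ Subgroup.center G := by
          intro z
          have h1 := Monoid.pow_exponent_eq_one ((z : G ⧸ Subgroup.center G))
          rw [he, pow_zero, pow_one] at h1
          exact (QuotientGroup.eq_one_iff _).mp h1
        exact hab (Subgroup.mem_center_iff.mp (hallc b) a)
      · obtain ⟨f, rfl⟩ : ∃ f, e = f + 1 := ⟨e - 1, by omega⟩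
        have hcore := PCentralAux.Core2 f G hpg hc hpowgen hno
        have hdvd : Monoid.exponent (G ⧸ Subgroup.center G) ∣ 2 ^ f := by
          refine Monoid.exponent_dvd_of_forall_pow_eq_one ?_
          intro gq
          refine QuotientGroup.induction_on gq ?_
          intro z
          rw [← PCentralAux.mk_pow, QuotientGroup.eq_one_iff]
          exact hcore z
        rw [he] at hdvd
        have hle := (Nat.pow_dvd_pow_iff_le_right (by norm_num : (1:ℕ) < 2)).mp hdvd
        omega
end
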